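/- arXiv:2209.11882 — 3 statements merged into one kernel-verified Lean document; each statement's English description precedes it below -/
import Mathlib

section
/- For all natural numbers a and b there exists n₀ such that for every integer n ≥ n₀ there exist binary words u and v of lengths n − a and n − b respectively with SCS(u,v) = n (equivalently LCS(u,v) = n − a − b) and m_LCS(u,v) = m_SCS(u,v) = binomial(a+b, a). -/
/-- Length of a longest common subsequence of two binary words. -/
noncomputable def LCSlen (u v : List Bool) : ℕ :=
  sSup {m : ℕ | ∃ w : List Bool, w.Sublist u ∧ w.Sublist v ∧ w.length = m}

/-- Length of a shortest common supersequence of two binary words. -/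
noncomputable def SCSlen (u v : List Bool) : ℕ :=
  sInf {m : ℕ | ∃ w : List Bool, u.Sublist w ∧ v.Sublist w ∧ w.length = m}

/-- Deletion distance between two words of equal length `n`: `n - LCS`. -/
noncomputable def delDist (u v : List Bool) : ℕ := u.length - LCSlen u v

/-- Number of distinct longest common subsequences. -/
noncomputable def mLCS (u v : List Bool) : ℕ :=
  Set.ncard {w : List Bool | w.Sublist u ∧ w.Sublist v ∧ w.length = LCSlen u v}

/-- Number of distinct shortest common supersequences. -/
noncomputable def mSCS (u v : List Bool) : ℕ :=
  Set.ncard {w : List Bool | u.Sublist w ∧ v.Sublist w ∧ w.length = SCSlen u v}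


open List

/-- `t` ones. -/
def ons (t : ℕ) : List Bool := List.replicate t true

/-- `(10)^k`. -/
def alt : ℕ → List Bool
  | 0 => []
  | k+1 => true :: false :: alt k

/-- u-side word with pending zeros: `0^c (10)^k 1^t`. -/
def Us (c k t : ℕ) : List Bool := List.replicate c false ++ alt k ++ ons t

/-- v-side pure word `(100)^γ 1^t`. -/
def Vw : ℕ → ℕ → List Bool
  | 0, t => ons t
  | γ+1, t => true :: false :: false :: Vw γ t

/-- v-side word with pending zeros. -/
def Vs (e γ t : ℕ) : List Bool := List.replicate e false ++ Vw γ t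

@[simp] lemma ons_zero : ons 0 = [] := rfl
@[simp] lemma ons_succ (t : ℕ) : ons (t+1) = true :: ons t := rfl
@[simp] lemma length_ons (t : ℕ) : (ons t).length = t := by simp [ons]
@[simp] lemma length_alt (k : ℕ) : (alt k).length = 2 * k := by
  induction k with
  | zero => rfl
  | succ k ih => simp [alt, ih]; ring
@[simp] lemma length_Vw (γ t : ℕ) : (Vw γ t).length = 3 * γ + t := by
  induction γ with
  | zero => simp [Vw]
  | succ γ ih => simp [Vw, ih]; ring
@[simp] lemma length_Us (c k t : ℕ) : (Us c k t).length = c + 2 * k + t := by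
  simp [Us]; ring
@[simp] lemma length_Vs (e γ t : ℕ) : (Vs e γ t).length = e + 3 * γ + t := by
  simp [Vs]; ring

lemma Us_zero (k t : ℕ) : Us 0 k t = alt k ++ ons t := by simp [Us]
lemma Us_succ (c k t : ℕ) : Us (c+1) k t = false :: Us c k t := by
  simp [Us, List.replicate_succ]
lemma Us_zero_succ (k t : ℕ) : Us 0 (k+1) t = true :: false :: Us 0 k t := by
  simp [Us, alt]
lemma Us_zero_zero (t : ℕ) : Us 0 0 t = ons t := by simp [Us, alt]
lemma Vs_zero (γ t : ℕ) : Vs 0 γ t = Vw γ t := by simp [Vs]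
lemma Vs_succ (e γ t : ℕ) : Vs (e+1) γ t = false :: Vs e γ t := by
  simp [Vs, List.replicate_succ]
lemma Vs_zero_succ (γ t : ℕ) : Vs 0 (γ+1) t = true :: Vs 2 γ t := by
  simp [Vs, Vw, List.replicate_succ]
lemma Vs_zero_zero (t : ℕ) : Vs 0 0 t = ons t := by simp [Vs, Vw]

/- ### basic sublist helpers -/

lemma strip_ne {a b : Bool} {l r : List Bool} (h : a :: l <+ b :: r) (hne : a ≠ b) :
    a :: l <+ r := by
  cases h with
  | cons _ h => exact h
  | cons_cons => exact absurd rfl hne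

lemma strip_eq {a : Bool} {l r : List Bool} (h : a :: l <+ a :: r) : l <+ r :=
  List.cons_sublist_cons.1 h

lemma sub_ons_length {w : List Bool} {t : ℕ} (h : w <+ ons t) : w.length ≤ t := by
  have := h.length_le; simpa using this

lemma false_not_sub_ons {w : List Bool} {t : ℕ} (h : false :: w <+ ons t) : False := by
  have : (false : Bool) ∈ ons t := h.subset List.mem_cons_self
  simpa [ons] using List.eq_of_mem_replicate this

/-- stripping a leading true through pending falses. -/
lemma true_strip_falses {w : List Bool} {c : ℕ} {z : List Bool}
    (h : true :: w <+ List.replicate c false ++ z) : true :: w <+ z := by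
  induction c with
  | zero => simpa using h
  | succ c ih =>
    rw [List.replicate_succ, List.cons_append] at h
    exact ih (strip_ne h (by simp))

lemma true_strip_Us {w : List Bool} {c k t : ℕ} (h : true :: w <+ Us c k t) :
    true :: w <+ Us 0 k t := true_strip_falses (by simpa [Us] using h)

lemma true_strip_Vs {w : List Bool} {e γ t : ℕ} (h : true :: w <+ Vs e γ t) :
    true :: w <+ Vs 0 γ t := true_strip_falses (by simpa [Vs] using h)

/- ### M1 : the LCS upper bound -/

theorem M1 : ∀ (w : List Bool) (c e k γ t : ℕ), c ≤ 1 → e ≤ 2 →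
    w <+ Us c k t → w <+ Vs e γ t → w.length ≤ min c e + γ + k + t := by
  intro w
  induction w with
  | nil => intro c e k γ t _ _ _ _; simp
  | cons x w ih =>
    intro c e k γ t hc he hu hv
    match x with
    | true =>
      have hu' := true_strip_Us hu
      have hv' := true_strip_Vs hv
      match k with
      | 0 =>
        rw [Us_zero_zero] at hu'
        have := sub_ons_length hu'; simpa using this.trans (by omega)
      | k+1 =>
        match γ with
        | 0 =>
          rw [Vs_zero_zero] at hv'
          have := sub_ons_length hv'; simpa using this.trans (by omega)
        | γ+1 =>
          rw [Us_zero_succ] at hu'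
          rw [Vs_zero_succ] at hv'
          have h1 : w <+ Us 1 k t := by
            have h2 := strip_eq hu'; rw [Us_succ]; exact h2
          have h2 : w <+ Vs 2 γ t := strip_eq hv'
          have := ih 1 2 k γ t (by norm_num) (by norm_num) h1 h2
          simp only [List.length_cons]; omega
    | false =>
      -- u side
      match c with
      | 0 =>
        match k with
        | 0 => rw [Us_zero_zero] at hu; exact (false_not_sub_ons hu).elim
        | k+1 =>
          rw [Us_zero_succ] at hu
          have hu' : w <+ Us 0 k t := strip_eq (strip_ne hu (by simp))
          match e with
          | 0 =>
            match γ with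
            | 0 => rw [Vs_zero_zero] at hv; exact (false_not_sub_ons hv).elim
            | γ+1 =>
              rw [Vs_zero_succ] at hv
              have hv1 : false :: w <+ Vs 2 γ t := strip_ne hv (by simp)
              have hv' : w <+ Vs 1 γ t := by
                have h2 : false :: w <+ false :: Vs 1 γ t := by
                  rw [← Vs_succ]; exact hv1
                exact strip_eq h2
              have := ih 0 1 k γ t (by norm_num) (by norm_num) hu' hv'
              simp only [List.length_cons]; omega
          | e+1 =>
            have hv' : w <+ Vs e γ t := strip_eq (by rw [← Vs_succ]; exact hv)
            have := ih 0 e k γ t (by norm_num) (by omega) hu' hv'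
            simp only [List.length_cons]; omega
      | 1 =>
        have hu' : w <+ Us 0 k t := strip_eq (by rw [← Us_succ]; exact hu)
        match e with
        | 0 =>
          match γ with
          | 0 => rw [Vs_zero_zero] at hv; exact (false_not_sub_ons hv).elim
          | γ+1 =>
            rw [Vs_zero_succ] at hv
            have hv1 : false :: w <+ Vs 2 γ t := strip_ne hv (by simp)
            have hv' : w <+ Vs 1 γ t := by
              have h2 : false :: w <+ false :: Vs 1 γ t := by
                rw [← Vs_succ]; exact hv1
              exact strip_eq h2
            have := ih 0 1 k γ t (by norm_num) (by norm_num) hu' hv'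
            simp only [List.length_cons]; omega
        | e+1 =>
          have hv' : w <+ Vs e γ t := strip_eq (by rw [← Vs_succ]; exact hv)
          have := ih 0 e k γ t (by norm_num) (by omega) hu' hv'
          simp only [List.length_cons]; omega

/- ### exchange lemma -/

theorem exch : ∀ (w u v : List Bool), u <+ w → v <+ w →
    ∃ d : List Bool, d <+ u ∧ d <+ v ∧ u.length + v.length ≤ w.length + d.length := by
  intro w
  induction w with
  | nil => intro u v hu hv
           rw [List.sublist_nil] at hu hv; subst hu; subst hv; exact ⟨[], by simp⟩
  | cons c w ih =>
    intro u v hu hv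
    cases hu with
    | cons _ hu' =>
      cases hv with
      | cons _ hv' =>
        obtain ⟨d, h1, h2, h3⟩ := ih u v hu' hv'
        exact ⟨d, h1, h2, by simp only [List.length_cons]; omega⟩
      | cons_cons _ hv' =>
        rename_i v'
        obtain ⟨d, h1, h2, h3⟩ := ih u v' hu' hv'
        exact ⟨d, h1, h2.cons _, by simp only [List.length_cons] at *; omega⟩
    | cons_cons _ hu' =>
      rename_i u'
      cases hv with
      | cons _ hv' =>
        obtain ⟨d, h1, h2, h3⟩ := ih u' v hu' hv'
        exact ⟨d, h1.cons _, h2, by simp only [List.length_cons] at *; omega⟩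
      | cons_cons _ hv' =>
        rename_i v'
        obtain ⟨d, h1, h2, h3⟩ := ih u' v' hu' hv'
        exact ⟨c :: d, h1.cons₂ _, h2.cons₂ _, by simp only [List.length_cons] at *; omega⟩

/- ### the LCS family -/

inductive Fam : ℕ → ℕ → ℕ → List Bool → Prop
  | nil (t : ℕ) : Fam 0 0 t (ons t)
  | one {γ k t : ℕ} {x : List Bool} : Fam γ k t x → Fam (γ+1) (k+1) t (true :: false :: x)
  | two {γ k t : ℕ} {x : List Bool} : Fam γ k t x → Fam (γ+1) (k+2) t (true :: false :: false :: x)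

lemma Fam.length {γ k t : ℕ} {w : List Bool} (h : Fam γ k t w) : w.length = γ + k + t := by
  induction h with
  | nil => simp
  | one _ ih => simp only [List.length_cons]; omega
  | two _ ih => simp only [List.length_cons]; omega

lemma Fam.sub_U {γ k t : ℕ} {w : List Bool} (h : Fam γ k t w) : w <+ Us 0 k t := by
  induction h with
  | nil t => rw [Us_zero_zero]
  | one h ih =>
    rw [Us_zero_succ]
    exact (ih.cons₂ _).cons₂ _
  | two h ih =>
    rw [Us_zero_succ, Us_zero_succ]
    exact (((ih.cons₂ _).cons _).cons₂ _).cons₂ _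

lemma Fam.sub_V {γ k t : ℕ} {w : List Bool} (h : Fam γ k t w) : w <+ Vs 0 γ t := by
  induction h with
  | nil t => rw [Vs_zero_zero]
  | one h ih =>
    rw [Vs_zero_succ, Vs_succ, Vs_succ]
    exact ((ih.cons _).cons₂ _).cons₂ _
  | two h ih =>
    rw [Vs_zero_succ, Vs_succ, Vs_succ]
    exact ((ih.cons₂ _).cons₂ _).cons₂ _

lemma Fam.heads {γ k t : ℕ} {w : List Bool} (h : Fam γ k t w) :
    w = ons t ∨ ∃ x, w = true :: x := by
  cases h with
  | nil => exact .inl rfl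
  | one _ => exact .inr ⟨_, rfl⟩
  | two _ => exact .inr ⟨_, rfl⟩

/- ### strip helpers for the classification -/

lemma strip_T_U {w : List Bool} {c k t : ℕ} (h : true :: w <+ Us c (k+1) t) : w <+ Us 1 k t := by
  have h' := true_strip_Us h
  rw [Us_zero_succ] at h'
  have h2 := strip_eq h'
  rw [Us_succ]; exact h2

lemma strip_T_V {w : List Bool} {e γ t : ℕ} (h : true :: w <+ Vs e (γ+1) t) : w <+ Vs 2 γ t := by
  have h' := true_strip_Vs h
  rw [Vs_zero_succ] at h'
  exact strip_eq h'

lemma strip_F_U0 {w : List Bool} {k t : ℕ} (h : false :: w <+ Us 0 (k+1) t) : w <+ Us 0 k t := by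
  rw [Us_zero_succ] at h
  have h1 : false :: w <+ false :: Us 0 k t := strip_ne h (by simp)
  exact strip_eq h1

lemma strip_F_Us1 {w : List Bool} {k t : ℕ} (h : false :: w <+ Us 1 k t) : w <+ Us 0 k t := by
  rw [Us_succ] at h; exact strip_eq h

lemma strip_F_Vs {w : List Bool} {e γ t : ℕ} (h : false :: w <+ Vs (e+1) γ t) : w <+ Vs e γ t := by
  rw [Vs_succ] at h; exact strip_eq h

lemma strip_F_V0 {w : List Bool} {γ t : ℕ} (h : false :: w <+ Vs 0 (γ+1) t) : w <+ Vs 1 γ t := by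
  rw [Vs_zero_succ] at h
  have h1 : false :: w <+ Vs 2 γ t := strip_ne h (by simp)
  exact strip_F_Vs (show false :: w <+ Vs (1+1) γ t from h1)

lemma sub_ons_tight {w : List Bool} {t : ℕ} (h : w <+ ons t) (hl : w.length = t) :
    w = ons t := h.eq_of_length (by simp [hl])

/-- shape produced by the interior state `(c=0, e=1)`. -/
def CL3shape (γ k t : ℕ) (x : List Bool) : Prop :=
  (∃ y k', k = k' + 1 ∧ x = false :: y ∧ Fam γ k' t y) ∨ Fam γ k t x

/- ### M2 : classification of tight common subsequences -/

theorem CLmain : ∀ (w : List Bool) (k γ t : ℕ),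
    (w <+ Us 0 k t → w <+ Vs 0 γ t → w.length = γ + k + t → Fam γ k t w) ∧
    (w <+ Us 1 k t → w <+ Vs 2 γ t → w.length = 1 + γ + k + t →
        ∃ x, w = false :: x ∧ CL3shape γ k t x) ∧
    (w <+ Us 0 k t → w <+ Vs 1 γ t → w.length = γ + k + t → CL3shape γ k t w) := by
  intro w
  induction w with
  | nil =>
    intro k γ t
    refine ⟨?_, ?_, ?_⟩
    · intro _ _ hl
      simp only [List.length_nil] at hl
      obtain ⟨h1, h2, h3⟩ : γ = 0 ∧ k = 0 ∧ t = 0 := by omega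
      subst h1; subst h2; subst h3
      exact Fam.nil 0
    · intro _ _ hl; simp only [List.length_nil] at hl; omega
    · intro _ _ hl
      simp only [List.length_nil] at hl
      obtain ⟨h1, h2, h3⟩ : γ = 0 ∧ k = 0 ∧ t = 0 := by omega
      subst h1; subst h2; subst h3
      exact .inr (Fam.nil 0)
  | cons x w ih =>
    intro k γ t
    refine ⟨?_, ?_, ?_⟩
    -- CL0
    · intro hu hv hl
      simp only [List.length_cons] at hl
      match x with
      | true =>
        match k with
        | 0 =>
          rw [Us_zero_zero] at hu
          have hle := sub_ons_length hu
          simp only [List.length_cons] at hle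
          have hγ : γ = 0 := by omega
          subst hγ
          rw [Vs_zero_zero] at hv
          have := sub_ons_tight hv (by simp only [List.length_cons]; omega)
          rw [this]; simpa using Fam.nil t
        | k+1 =>
          match γ with
          | 0 =>
            rw [Vs_zero_zero] at hv
            have hle := sub_ons_length hv
            simp only [List.length_cons] at hle; omega
          | γ+1 =>
            have hu' : w <+ Us 1 k t := strip_T_U hu
            have hv' : w <+ Vs 2 γ t := strip_T_V hv
            obtain ⟨x, hx, hsh⟩ := (ih k γ t).2.1 hu' hv' (by omega)
            rcases hsh with ⟨y, k', hk, hy, hf⟩ | hf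
            · subst hx; subst hy; subst hk
              exact Fam.two hf
            · subst hx
              exact Fam.one hf
      | false =>
        match k with
        | 0 => rw [Us_zero_zero] at hu; exact (false_not_sub_ons hu).elim
        | k+1 =>
          match γ with
          | 0 => rw [Vs_zero_zero] at hv; exact (false_not_sub_ons hv).elim
          | γ+1 =>
            have hu' : w <+ Us 0 k t := strip_F_U0 hu
            have hv' : w <+ Vs 1 γ t := strip_F_V0 hv
            have := M1 w 0 1 k γ t (by norm_num) (by norm_num) hu' hv'
            simp only [Nat.min_self, Nat.zero_min] at this
            omega
    -- CL2
    · intro hu hv hl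
      simp only [List.length_cons] at hl
      match x with
      | true =>
        have hu0 := true_strip_Us hu
        have hv0 := true_strip_Vs hv
        match k with
        | 0 =>
          rw [Us_zero_zero] at hu0
          have hle := sub_ons_length hu0
          simp only [List.length_cons] at hle; omega
        | k+1 =>
          match γ with
          | 0 =>
            rw [Vs_zero_zero] at hv0
            have hle := sub_ons_length hv0
            simp only [List.length_cons] at hle; omega
          | γ+1 =>
            have hu' : w <+ Us 1 k t := strip_T_U hu
            have hv' : w <+ Vs 2 γ t := strip_T_V (show true :: w <+ Vs 0 (γ+1) t from hv0)
            have := M1 w 1 2 k γ t (by norm_num) (by norm_num) hu' hv'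
            omega
      | false =>
        have hu' : w <+ Us 0 k t := strip_F_Us1 hu
        have hv' : w <+ Vs 1 γ t := strip_F_Vs (show false :: w <+ Vs (1+1) γ t from hv)
        exact ⟨w, rfl, (ih k γ t).2.2 hu' hv' (by omega)⟩
    -- CL3
    · intro hu hv hl
      simp only [List.length_cons] at hl
      match x with
      | true =>
        have hv0 := true_strip_Vs hv
        match k with
        | 0 =>
          rw [Us_zero_zero] at hu
          have hle := sub_ons_length hu
          simp only [List.length_cons] at hle
          have hγ : γ = 0 := by omega
          subst hγ
          have := sub_ons_tight hu (by simp only [List.length_cons]; omega)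
          rw [this]
          exact .inr (by simpa using Fam.nil t)
        | k+1 =>
          match γ with
          | 0 =>
            rw [Vs_zero_zero] at hv0
            have hle := sub_ons_length hv0
            simp only [List.length_cons] at hle; omega
          | γ+1 =>
            have hu' : w <+ Us 1 k t := strip_T_U hu
            have hv' : w <+ Vs 2 γ t := strip_T_V (show true :: w <+ Vs 0 (γ+1) t from hv0)
            obtain ⟨x, hx, hsh⟩ := (ih k γ t).2.1 hu' hv' (by omega)
            rcases hsh with ⟨y, k', hk, hy, hf⟩ | hf
            · subst hx; subst hy; subst hk
              exact .inr (Fam.two hf)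
            · subst hx
              exact .inr (Fam.one hf)
      | false =>
        match k with
        | 0 => rw [Us_zero_zero] at hu; exact (false_not_sub_ons hu).elim
        | k+1 =>
          have hu' : w <+ Us 0 k t := strip_F_U0 hu
          have hv' : w <+ Vs 0 γ t := strip_F_Vs (show false :: w <+ Vs (0+1) γ t from hv)
          have hf := (ih k γ t).1 hu' hv' (by omega)
          exact .inl ⟨w, k, rfl, rfl, hf⟩

/- ### the LCS family as a Finset, and its cardinality -/

def famSet : ℕ → ℕ → ℕ → Finset (List Bool)
  | 0, k, t => if k = 0 then {ons t} else ∅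
  | γ+1, k, t =>
      (if 1 ≤ k then (famSet γ (k-1) t).image (fun x => true :: false :: x) else ∅) ∪
      (if 2 ≤ k then (famSet γ (k-2) t).image (fun x => true :: false :: false :: x) else ∅)

lemma famSet_to_Fam : ∀ (γ k t : ℕ) (w : List Bool), w ∈ famSet γ k t → Fam γ k t w := by
  intro γ
  induction γ with
  | zero =>
    intro k t w hw
    by_cases hk : k = 0
    · subst hk
      rw [show famSet 0 0 t = {ons t} from by simp [famSet]] at hw
      rw [Finset.mem_singleton] at hw
      subst hw; exact Fam.nil t
    · simp only [famSet, if_neg hk, Finset.notMem_empty] at hw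
  | succ γ ih =>
    intro k t w hw
    simp only [famSet, Finset.mem_union] at hw
    rcases hw with hw | hw
    · by_cases h1 : 1 ≤ k
      · simp only [if_pos h1, Finset.mem_image] at hw
        obtain ⟨x, hx, rfl⟩ := hw
        have := Fam.one (ih (k-1) t x hx)
        rwa [show k - 1 + 1 = k by omega] at this
      · simp only [if_neg h1, Finset.notMem_empty] at hw
    · by_cases h2 : 2 ≤ k
      · simp only [if_pos h2, Finset.mem_image] at hw
        obtain ⟨x, hx, rfl⟩ := hw
        have := Fam.two (ih (k-2) t x hx)
        rwa [show k - 2 + 2 = k by omega] at this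
      · simp only [if_neg h2, Finset.notMem_empty] at hw

lemma Fam_to_famSet : ∀ {γ k t : ℕ} {w : List Bool}, Fam γ k t w → w ∈ famSet γ k t := by
  intro γ k t w h
  induction h with
  | nil t => simp [famSet]
  | @one γ k t x _ ih =>
    simp only [famSet, Finset.mem_union]
    left
    rw [if_pos (by omega : 1 ≤ k + 1)]
    simp only [Finset.mem_image]
    exact ⟨x, by simpa using ih, rfl⟩
  | @two γ k t x _ ih =>
    simp only [famSet, Finset.mem_union]
    right
    rw [if_pos (by omega : 2 ≤ k + 2)]
    simp only [Finset.mem_image]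
    exact ⟨x, by simpa using ih, rfl⟩

lemma famSet_low : ∀ (γ k t : ℕ), k < γ → famSet γ k t = ∅ := by
  intro γ
  induction γ with
  | zero => intro k t h; omega
  | succ γ ih =>
    intro k t h
    simp only [famSet]
    have e1 : (if 1 ≤ k then (famSet γ (k-1) t).image (fun x => true :: false :: x) else ∅) = ∅ := by
      by_cases h1 : 1 ≤ k
      · rw [if_pos h1, ih (k-1) t (by omega)]; simp
      · rw [if_neg h1]
    have e2 : (if 2 ≤ k then (famSet γ (k-2) t).image (fun x => true :: false :: false :: x) else ∅) = ∅ := by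
      by_cases h2 : 2 ≤ k
      · rw [if_pos h2, ih (k-2) t (by omega)]; simp
      · rw [if_neg h2]
    rw [e1, e2]; simp

lemma famSet_card : ∀ (γ j t : ℕ), (famSet γ (γ + j) t).card = Nat.choose γ j := by
  intro γ
  induction γ with
  | zero =>
    intro j t
    match j with
    | 0 => simp [famSet]
    | j+1 => simp [famSet, Nat.choose]
  | succ γ ih =>
    intro j t
    have h1 : 1 ≤ γ + 1 + j := by omega
    have hinj2 : Function.Injective (fun x : List Bool => true :: false :: x) := by
      intro a b h; simpa using h
    have hinj3 : Function.Injective (fun x : List Bool => true :: false :: false :: x) := by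
      intro a b h; simpa using h
    have hdisj : Disjoint
        ((famSet γ (γ + 1 + j - 1) t).image (fun x => true :: false :: x))
        ((famSet γ (γ + 1 + j - 2) t).image (fun x => true :: false :: false :: x)) := by
      rw [Finset.disjoint_left]
      rintro w hw hw'
      simp only [Finset.mem_image] at hw hw'
      obtain ⟨x, hx, hxe⟩ := hw
      obtain ⟨y, hy, hye⟩ := hw'
      rw [← hye] at hxe
      have hx2 : x = false :: y := by simpa using hxe
      have hfam := famSet_to_Fam _ _ _ _ hx
      rcases hfam.heads with h | ⟨z, hz⟩
      · rw [hx2] at h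
        match t, h with
        | t+1, h =>
          rw [show ons (t+1) = true :: ons t from rfl] at h
          simp at h
      · rw [hx2] at hz; simp at hz
    simp only [famSet]
    rw [if_pos h1]
    by_cases h2 : 2 ≤ γ + 1 + j
    · rw [if_pos h2]
      rw [Finset.card_union_of_disjoint hdisj,
        Finset.card_image_of_injective _ hinj2, Finset.card_image_of_injective _ hinj3]
      match j with
      | 0 =>
        have : γ + 1 + 0 - 2 < γ := by omega
        rw [famSet_low γ _ t this]
        rw [show γ + 1 + 0 - 1 = γ + 0 by omega]
        have hih := ih 0 t
        rw [Nat.add_zero] at hih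
        rw [Nat.choose_zero_right] at hih
        simp [hih]
      | j+1 =>
        rw [show γ + 1 + (j+1) - 1 = γ + (j+1) by omega,
          show γ + 1 + (j+1) - 2 = γ + j by omega, ih (j+1) t, ih j t]
        rw [Nat.choose_succ_succ]
        simp only [Nat.succ_eq_add_one]
        omega
    · rw [if_neg h2]
      have hj : j = 0 ∧ γ = 0 := by omega
      obtain ⟨rfl, rfl⟩ := hj
      simp [famSet]

/- ### the SCS family -/

inductive GFam : ℕ → ℕ → ℕ → List Bool → Prop
  | nil (t : ℕ) : GFam 0 0 t (ons t)
  | zero {γ k t : ℕ} {x : List Bool} : GFam γ k t x →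
      GFam (γ+1) (k+1) t (true :: false :: false :: x)
  | one' {γ k t : ℕ} {x : List Bool} : GFam γ k t x →
      GFam (γ+1) (k+2) t (true :: false :: true :: false :: x)

lemma GFam.length {γ k t : ℕ} {w : List Bool} (h : GFam γ k t w) : w.length = k + 2*γ + t := by
  induction h with
  | nil => simp
  | zero _ ih => simp only [List.length_cons]; omega
  | one' _ ih => simp only [List.length_cons]; omega

lemma GFam.sup_U {γ k t : ℕ} {w : List Bool} (h : GFam γ k t w) : Us 0 k t <+ w := by
  induction h with
  | nil t => rw [Us_zero_zero]
  | zero h ih =>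
    rw [Us_zero_succ]
    exact ((ih.cons _).cons₂ _).cons₂ _
  | one' h ih =>
    rw [Us_zero_succ, Us_zero_succ]
    exact (((ih.cons₂ _).cons₂ _).cons₂ _).cons₂ _

lemma GFam.sup_V {γ k t : ℕ} {w : List Bool} (h : GFam γ k t w) : Vs 0 γ t <+ w := by
  induction h with
  | nil t => rw [Vs_zero_zero]
  | zero h ih =>
    rw [Vs_zero_succ, Vs_succ, Vs_succ, Vs_zero]
    exact ((ih.cons₂ _).cons₂ _).cons₂ _
  | one' h ih =>
    rw [Vs_zero_succ, Vs_succ, Vs_succ, Vs_zero]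
    exact (((ih.cons₂ _).cons _).cons₂ _).cons₂ _

lemma GFam.heads {γ k t : ℕ} {w : List Bool} (h : GFam γ k t w) :
    w = ons t ∨ ∃ x, w = true :: x := by
  cases h with
  | nil => exact .inl rfl
  | zero _ => exact .inr ⟨_, rfl⟩
  | one' _ => exact .inr ⟨_, rfl⟩

def gfamSet : ℕ → ℕ → ℕ → Finset (List Bool)
  | 0, k, t => if k = 0 then {ons t} else ∅
  | γ+1, k, t =>
      (if 1 ≤ k then (gfamSet γ (k-1) t).image (fun x => true :: false :: false :: x) else ∅) ∪
      (if 2 ≤ k then (gfamSet γ (k-2) t).image (fun x => true :: false :: true :: false :: x) else ∅)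

lemma gfamSet_to_GFam : ∀ (γ k t : ℕ) (w : List Bool), w ∈ gfamSet γ k t → GFam γ k t w := by
  intro γ
  induction γ with
  | zero =>
    intro k t w hw
    by_cases hk : k = 0
    · subst hk
      rw [show gfamSet 0 0 t = {ons t} from by simp [gfamSet]] at hw
      rw [Finset.mem_singleton] at hw
      subst hw; exact GFam.nil t
    · simp only [gfamSet, if_neg hk, Finset.notMem_empty] at hw
  | succ γ ih =>
    intro k t w hw
    simp only [gfamSet, Finset.mem_union] at hw
    rcases hw with hw | hw
    · by_cases h1 : 1 ≤ k
      · simp only [if_pos h1, Finset.mem_image] at hw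
        obtain ⟨x, hx, rfl⟩ := hw
        have := GFam.zero (ih (k-1) t x hx)
        rwa [show k - 1 + 1 = k by omega] at this
      · simp only [if_neg h1, Finset.notMem_empty] at hw
    · by_cases h2 : 2 ≤ k
      · simp only [if_pos h2, Finset.mem_image] at hw
        obtain ⟨x, hx, rfl⟩ := hw
        have := GFam.one' (ih (k-2) t x hx)
        rwa [show k - 2 + 2 = k by omega] at this
      · simp only [if_neg h2, Finset.notMem_empty] at hw

lemma GFam_to_gfamSet : ∀ {γ k t : ℕ} {w : List Bool}, GFam γ k t w → w ∈ gfamSet γ k t := by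
  intro γ k t w h
  induction h with
  | nil t => simp [gfamSet]
  | @zero γ k t x _ ih =>
    simp only [gfamSet, Finset.mem_union]
    left
    rw [if_pos (by omega : 1 ≤ k + 1)]
    simp only [Finset.mem_image]
    exact ⟨x, by simpa using ih, rfl⟩
  | @one' γ k t x _ ih =>
    simp only [gfamSet, Finset.mem_union]
    right
    rw [if_pos (by omega : 2 ≤ k + 2)]
    simp only [Finset.mem_image]
    exact ⟨x, by simpa using ih, rfl⟩

lemma gfamSet_low : ∀ (γ k t : ℕ), k < γ → gfamSet γ k t = ∅ := by
  intro γ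
  induction γ with
  | zero => intro k t h; omega
  | succ γ ih =>
    intro k t h
    simp only [gfamSet]
    have e1 : (if 1 ≤ k then (gfamSet γ (k-1) t).image
        (fun x => true :: false :: false :: x) else ∅) = ∅ := by
      by_cases h1 : 1 ≤ k
      · rw [if_pos h1, ih (k-1) t (by omega)]; simp
      · rw [if_neg h1]
    have e2 : (if 2 ≤ k then (gfamSet γ (k-2) t).image
        (fun x => true :: false :: true :: false :: x) else ∅) = ∅ := by
      by_cases h2 : 2 ≤ k
      · rw [if_pos h2, ih (k-2) t (by omega)]; simp
      · rw [if_neg h2]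
    rw [e1, e2]; simp

lemma gfamSet_card : ∀ (γ j t : ℕ), (gfamSet γ (γ + j) t).card = Nat.choose γ j := by
  intro γ
  induction γ with
  | zero =>
    intro j t
    match j with
    | 0 => simp [gfamSet]
    | j+1 => simp [gfamSet, Nat.choose]
  | succ γ ih =>
    intro j t
    have h1 : 1 ≤ γ + 1 + j := by omega
    have hinj2 : Function.Injective (fun x : List Bool => true :: false :: false :: x) := by
      intro a b h; simpa using h
    have hinj3 : Function.Injective (fun x : List Bool => true :: false :: true :: false :: x) := by
      intro a b h; simpa using h
    have hdisj : Disjoint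
        ((gfamSet γ (γ + 1 + j - 1) t).image (fun x => true :: false :: false :: x))
        ((gfamSet γ (γ + 1 + j - 2) t).image (fun x => true :: false :: true :: false :: x)) := by
      rw [Finset.disjoint_left]
      rintro w hw hw'
      simp only [Finset.mem_image] at hw hw'
      obtain ⟨x, hx, hxe⟩ := hw
      obtain ⟨y, hy, hye⟩ := hw'
      rw [← hye] at hxe
      simp at hxe
    simp only [gfamSet]
    rw [if_pos h1]
    by_cases h2 : 2 ≤ γ + 1 + j
    · rw [if_pos h2]
      rw [Finset.card_union_of_disjoint hdisj,
        Finset.card_image_of_injective _ hinj2, Finset.card_image_of_injective _ hinj3]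
      match j with
      | 0 =>
        have : γ + 1 + 0 - 2 < γ := by omega
        rw [gfamSet_low γ _ t this]
        rw [show γ + 1 + 0 - 1 = γ + 0 by omega]
        have hih := ih 0 t
        rw [Nat.add_zero] at hih
        rw [Nat.choose_zero_right] at hih
        simp [hih]
      | j+1 =>
        rw [show γ + 1 + (j+1) - 1 = γ + (j+1) by omega,
          show γ + 1 + (j+1) - 2 = γ + j by omega, ih (j+1) t, ih j t]
        rw [Nat.choose_succ_succ]
        simp only [Nat.succ_eq_add_one]
        omega
    · rw [if_neg h2]
      have hj : j = 0 ∧ γ = 0 := by omega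
      obtain ⟨rfl, rfl⟩ := hj
      simp [gfamSet]

/- ### SCS lower bound at general states -/

lemma SB (w : List Bool) (c e k γ t : ℕ) (hc : c ≤ 1) (he : e ≤ 2)
    (hu : Us c k t <+ w) (hv : Vs e γ t <+ w) :
    (c + 2*k + t) + (e + 3*γ + t) ≤ w.length + (min c e + γ + k + t) := by
  obtain ⟨d, hdu, hdv, hlen⟩ := exch w _ _ hu hv
  have hM := M1 d c e k γ t hc he hdu hdv
  rw [length_Us, length_Vs] at hlen
  omega

/- helper strips for supersequences -/

lemma supstrip_U0_false {w : List Bool} {k t : ℕ} (h : Us 0 k t <+ false :: w) :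
    Us 0 k t <+ w := by
  match k with
  | k+1 =>
    rw [Us_zero_succ] at h ⊢
    exact strip_ne h (by simp)
  | 0 =>
    match t with
    | 0 =>
      have : Us 0 0 0 = ([] : List Bool) := by simp [Us_zero_zero, ons]
      rw [this]
      exact List.nil_sublist w
    | t+1 =>
      rw [Us_zero_zero] at h ⊢
      rw [show ons (t+1) = true :: ons t from rfl] at h ⊢
      exact strip_ne h (by simp)

def S3shape (γ k t : ℕ) (y : List Bool) : Prop := ∃ z, y = false :: z ∧ GFam γ k t z

def S2shape (γ k t : ℕ) (x : List Bool) : Prop :=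
  (∃ y k', k = k' + 1 ∧ x = true :: y ∧ S3shape γ k' t y) ∨
    (∃ y, x = false :: y ∧ GFam γ k t y)

/- ### M2' : classification of tight common supersequences -/

theorem CLS : ∀ (w : List Bool) (k γ t : ℕ),
    (Us 0 k t <+ w → Vs 0 γ t <+ w → w.length = k + 2*γ + t → GFam γ k t w) ∧
    (Us 1 k t <+ w → Vs 2 γ t <+ w → w.length = k + 2*γ + t + 2 →
        ∃ x, w = false :: x ∧ S2shape γ k t x) ∧
    (Us 0 k t <+ w → Vs 1 γ t <+ w → w.length = k + 2*γ + t + 1 → S2shape γ k t w) ∧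
    (Us 1 k t <+ w → Vs 1 γ t <+ w → w.length = k + 2*γ + t + 1 → S3shape γ k t w) := by
  intro w
  induction w with
  | nil =>
    intro k γ t
    refine ⟨?_, ?_, ?_, ?_⟩
    · intro hu hv hl
      have h1 := congrArg List.length (List.sublist_nil.mp hu)
      have h2 := congrArg List.length (List.sublist_nil.mp hv)
      rw [length_Us] at h1; rw [length_Vs] at h2
      simp only [List.length_nil] at h1 h2
      obtain ⟨rfl, rfl, rfl⟩ : k = 0 ∧ γ = 0 ∧ t = 0 := by omega
      exact GFam.nil 0
    · intro hu _ _
      have h1 := congrArg List.length (List.sublist_nil.mp hu)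
      rw [length_Us] at h1; simp only [List.length_nil] at h1; omega
    · intro _ hv _
      have h2 := congrArg List.length (List.sublist_nil.mp hv)
      rw [length_Vs] at h2; simp only [List.length_nil] at h2; omega
    · intro hu _ _
      have h1 := congrArg List.length (List.sublist_nil.mp hu)
      rw [length_Us] at h1; simp only [List.length_nil] at h1; omega
  | cons x w ih =>
    intro k γ t
    refine ⟨?_, ?_, ?_, ?_⟩
    -- S0
    · intro hu hv hl
      simp only [List.length_cons] at hl
      match γ with
      | 0 =>
        rw [Vs_zero_zero] at hv
        have hk : k = 0 := by
          have := hu.length_le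
          rw [length_Us] at this
          simp only [List.length_cons] at this
          omega
        subst hk
        rw [Us_zero_zero] at hu
        have : ons t = x :: w := hu.eq_of_length (by
          simp only [length_ons, List.length_cons]; omega)
        rw [← this]
        exact GFam.nil t
      | γ+1 =>
        have hk1 : 1 ≤ k := by
          have := hv.length_le
          rw [length_Vs] at this
          simp only [List.length_cons] at this
          omega
        obtain ⟨k', rfl⟩ : ∃ k', k = k' + 1 := ⟨k - 1, by omega⟩
        match x with
        | false =>
          have hu' : Us 0 (k'+1) t <+ w := by
            rw [Us_zero_succ] at hu ⊢
            exact strip_ne hu (by simp)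
          have hv' : Vs 0 (γ+1) t <+ w := by
            rw [Vs_zero_succ] at hv ⊢
            exact strip_ne hv (by simp)
          have := SB w 0 0 (k'+1) (γ+1) t (by norm_num) (by norm_num) hu' hv'
          simp only [Nat.min_self, List.length_cons] at this hl
          omega
        | true =>
          have hu' : Us 1 k' t <+ w := by
            rw [Us_zero_succ] at hu
            have := strip_eq hu
            rw [Us_succ]; exact this
          have hv' : Vs 2 γ t <+ w := by
            rw [Vs_zero_succ] at hv
            exact strip_eq hv
          obtain ⟨x, rfl, hsh⟩ := (ih k' γ t).2.1 hu' hv' (by omega)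
          rcases hsh with ⟨y, k'', hk, rfl, ⟨z, rfl, gz⟩⟩ | ⟨y, rfl, gy⟩
          · subst hk
            exact GFam.one' gz
          · exact GFam.zero gy
    -- S1
    · intro hu hv hl
      simp only [List.length_cons] at hl
      match x with
      | true =>
        have hu' : Us 1 k t <+ w := by
          rw [Us_succ] at hu ⊢
          exact strip_ne hu (by simp)
        have hv' : Vs 2 γ t <+ w := by
          rw [show (2:ℕ) = 1 + 1 from rfl, Vs_succ] at hv ⊢
          exact strip_ne hv (by simp)
        have := SB w 1 2 k γ t (by norm_num) (by norm_num) hu' hv'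
        omega
      | false =>
        have hu' : Us 0 k t <+ w := by
          rw [Us_succ] at hu
          exact strip_eq hu
        have hv' : Vs 1 γ t <+ w := by
          rw [show (2:ℕ) = 1 + 1 from rfl, Vs_succ] at hv
          exact strip_eq hv
        exact ⟨w, rfl, (ih k γ t).2.2.1 hu' hv' (by omega)⟩
    -- S2
    · intro hu hv hl
      simp only [List.length_cons] at hl
      match x with
      | true =>
        match k with
        | 0 =>
          have hγ : γ = 0 := by
            have := hv.length_le
            rw [length_Vs] at this
            simp only [List.length_cons] at this
            omega
          subst hγ
          have hv' : Vs 1 0 t <+ w := by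
            rw [Vs_succ] at hv ⊢
            exact strip_ne hv (by simp)
          have := hv'.length_le
          rw [length_Vs] at this
          omega
        | k'+1 =>
          have hu' : Us 1 k' t <+ w := by
            rw [Us_zero_succ] at hu
            have := strip_eq hu
            rw [Us_succ]; exact this
          have hv' : Vs 1 γ t <+ w := by
            rw [Vs_succ] at hv ⊢
            exact strip_ne hv (by simp)
          have hsh := (ih k' γ t).2.2.2 hu' hv' (by omega)
          exact .inl ⟨w, k', rfl, rfl, hsh⟩
      | false =>
        have hu' : Us 0 k t <+ w := supstrip_U0_false hu
        have hv' : Vs 0 γ t <+ w := by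
          rw [Vs_succ] at hv
          exact strip_eq hv
        have hg := (ih k γ t).1 hu' hv' (by omega)
        exact .inr ⟨w, rfl, hg⟩
    -- S3
    · intro hu hv hl
      simp only [List.length_cons] at hl
      match x with
      | true =>
        have hu' : Us 1 k t <+ w := by
          rw [Us_succ] at hu ⊢
          exact strip_ne hu (by simp)
        have hv' : Vs 1 γ t <+ w := by
          rw [Vs_succ] at hv ⊢
          exact strip_ne hv (by simp)
        have := SB w 1 1 k γ t (by norm_num) (by norm_num) hu' hv'
        simp only [Nat.min_self] at this
        omega
      | false =>
        have hu' : Us 0 k t <+ w := by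
          rw [Us_succ] at hu
          exact strip_eq hu
        have hv' : Vs 0 γ t <+ w := by
          rw [Vs_succ] at hv
          exact strip_eq hv
        exact ⟨w, rfl, (ih k γ t).1 hu' hv' (by omega)⟩

/- ### glue -/

lemma fam_nonempty (γ j t : ℕ) (hj : j ≤ γ) : ∃ w, Fam γ (γ+j) t w := by
  have h := famSet_card γ j t
  have hpos : 0 < (famSet γ (γ+j) t).card := by
    rw [h]; exact Nat.choose_pos hj
  obtain ⟨w, hw⟩ := Finset.card_pos.mp hpos
  exact ⟨w, famSet_to_Fam _ _ _ _ hw⟩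

lemma gfam_nonempty (γ j t : ℕ) (hj : j ≤ γ) : ∃ w, GFam γ (γ+j) t w := by
  have h := gfamSet_card γ j t
  have hpos : 0 < (gfamSet γ (γ+j) t).card := by
    rw [h]; exact Nat.choose_pos hj
  obtain ⟨w, hw⟩ := Finset.card_pos.mp hpos
  exact ⟨w, gfamSet_to_GFam _ _ _ _ hw⟩

lemma lcs_glue (γ j t : ℕ) (hj : j ≤ γ) :
    LCSlen (Us 0 (γ+j) t) (Vs 0 γ t) = γ + (γ+j) + t := by
  obtain ⟨w₀, hw₀⟩ := fam_nonempty γ j t hj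
  have hmem : γ + (γ+j) + t ∈
      {m : ℕ | ∃ w : List Bool, w.Sublist (Us 0 (γ+j) t) ∧ w.Sublist (Vs 0 γ t) ∧ w.length = m} :=
    ⟨w₀, hw₀.sub_U, hw₀.sub_V, hw₀.length⟩
  have hbd : ∀ m ∈ {m : ℕ | ∃ w : List Bool,
      w.Sublist (Us 0 (γ+j) t) ∧ w.Sublist (Vs 0 γ t) ∧ w.length = m}, m ≤ γ + (γ+j) + t := by
    rintro m ⟨w, h1, h2, rfl⟩
    have := M1 w 0 0 (γ+j) γ t (by norm_num) (by norm_num) h1 h2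
    simpa using this
  exact le_antisymm (csSup_le ⟨_, hmem⟩ hbd) (le_csSup ⟨_, fun x hx => hbd x hx⟩ hmem)

lemma mlcs_glue (γ j t : ℕ) (hj : j ≤ γ) :
    mLCS (Us 0 (γ+j) t) (Vs 0 γ t) = Nat.choose γ j := by
  have hset : {w : List Bool | w.Sublist (Us 0 (γ+j) t) ∧ w.Sublist (Vs 0 γ t) ∧
      w.length = LCSlen (Us 0 (γ+j) t) (Vs 0 γ t)} = ↑(famSet γ (γ+j) t) := by
    ext w
    simp only [Set.mem_setOf_eq, Finset.coe_sort_coe, Finset.mem_coe]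
    constructor
    · rintro ⟨h1, h2, h3⟩
      rw [lcs_glue γ j t hj] at h3
      exact Fam_to_famSet ((CLmain w (γ+j) γ t).1 h1 h2 h3)
    · intro hw
      have hf := famSet_to_Fam _ _ _ _ hw
      exact ⟨hf.sub_U, hf.sub_V, by rw [lcs_glue γ j t hj]; exact hf.length⟩
  rw [mLCS, hset, Set.ncard_coe_finset, famSet_card]

lemma scs_glue (γ j t : ℕ) (hj : j ≤ γ) :
    SCSlen (Us 0 (γ+j) t) (Vs 0 γ t) = (γ+j) + 2*γ + t := by
  obtain ⟨w₀, hw₀⟩ := gfam_nonempty γ j t hj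
  have hmem : (γ+j) + 2*γ + t ∈
      {m : ℕ | ∃ w : List Bool, (Us 0 (γ+j) t).Sublist w ∧ (Vs 0 γ t).Sublist w ∧ w.length = m} :=
    ⟨w₀, hw₀.sup_U, hw₀.sup_V, hw₀.length⟩
  have hbd : ∀ m ∈ {m : ℕ | ∃ w : List Bool,
      (Us 0 (γ+j) t).Sublist w ∧ (Vs 0 γ t).Sublist w ∧ w.length = m},
      (γ+j) + 2*γ + t ≤ m := by
    rintro m ⟨w, h1, h2, rfl⟩
    have := SB w 0 0 (γ+j) γ t (by norm_num) (by norm_num) h1 h2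
    simp only [Nat.min_self] at this
    omega
  exact le_antisymm (csInf_le ⟨0, fun x _ => Nat.zero_le x⟩ hmem) (le_csInf ⟨_, hmem⟩ hbd)

lemma mscs_glue (γ j t : ℕ) (hj : j ≤ γ) :
    mSCS (Us 0 (γ+j) t) (Vs 0 γ t) = Nat.choose γ j := by
  have hset : {w : List Bool | (Us 0 (γ+j) t).Sublist w ∧ (Vs 0 γ t).Sublist w ∧
      w.length = SCSlen (Us 0 (γ+j) t) (Vs 0 γ t)} = ↑(gfamSet γ (γ+j) t) := by
    ext w
    simp only [Set.mem_setOf_eq, Finset.coe_sort_coe, Finset.mem_coe]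
    constructor
    · rintro ⟨h1, h2, h3⟩
      rw [scs_glue γ j t hj] at h3
      exact GFam_to_gfamSet ((CLS w (γ+j) γ t).1 h1 h2 h3)
    · intro hw
      have hf := gfamSet_to_GFam _ _ _ _ hw
      exact ⟨hf.sup_U, hf.sup_V, by rw [scs_glue γ j t hj]; exact hf.length⟩
  rw [mSCS, hset, Set.ncard_coe_finset, gfamSet_card]

theorem stmt16 (a b : ℕ) :
    ∃ n₀ : ℕ, ∀ n : ℕ, n₀ ≤ n →
      ∃ u v : List Bool, u.length = n - a ∧ v.length = n - b ∧ SCSlen u v = n ∧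
        mLCS u v = (a + b).choose a ∧ mSCS u v = (a + b).choose a := by
  refine ⟨3*a + 4*b, fun n hn => ?_⟩
  set t := n - (3*a + 4*b) with ht
  set γ := a + b with hγ
  set j := b with hj
  have hjγ : j ≤ γ := by omega
  refine ⟨Us 0 (γ+j) t, Vs 0 γ t, ?_, ?_, ?_, ?_, ?_⟩
  · rw [length_Us]; omega
  · rw [length_Vs]; omega
  · rw [scs_glue γ j t hjγ]; omega
  · rw [mlcs_glue γ j t hjγ]
    rw [show a = a + b - b by omega]
    rw [Nat.choose_symm (by omega : b ≤ a + b)]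
  · rw [mscs_glue γ j t hjγ]
    rw [show a = a + b - b by omega]
    rw [Nat.choose_symm (by omega : b ≤ a + b)]
end

section
/- Define ℓ(a,b) := LCS((10)^⟨a⟩, (0110)^⟨b⟩). For all integers a ≥ 3 and even b ≥ 2: ℓ(a,b) = max(1 + ℓ(a−1, b−2), 2 + ℓ(a−3, b−2)). -/
set_option maxHeartbeats 1000000

/-- `repPrefix x m` is the prefix of length `m` of the infinite periodic word `xxx⋯`. -/
def repPrefix (x : List Bool) (m : ℕ) : List Bool :=
  (List.flatten (List.replicate m x)).take m

/-! ### Basic facts about `LCSlen` -/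

lemma lcs_bdd (u v : List Bool) :
    BddAbove {m : ℕ | ∃ w : List Bool, w.Sublist u ∧ w.Sublist v ∧ w.length = m} := by
  refine ⟨u.length, fun m hm => ?_⟩
  obtain ⟨w, h1, _, h3⟩ := hm
  exact h3 ▸ h1.length_le

lemma lcs_le {w u v : List Bool} (h1 : w.Sublist u) (h2 : w.Sublist v) :
    w.length ≤ LCSlen u v :=
  le_csSup (lcs_bdd u v) ⟨w, h1, h2, rfl⟩

lemma lcs_exists (u v : List Bool) :
    ∃ w : List Bool, w.Sublist u ∧ w.Sublist v ∧ w.length = LCSlen u v := by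
  have h := Nat.sSup_mem (s := {m : ℕ | ∃ w : List Bool, w.Sublist u ∧ w.Sublist v ∧ w.length = m})
    ⟨0, [], List.nil_sublist u, List.nil_sublist v, rfl⟩ (lcs_bdd u v)
  exact h

lemma lcs_nil_left (v : List Bool) : LCSlen [] v = 0 := by
  obtain ⟨w, h1, _, h3⟩ := lcs_exists [] v
  rw [List.sublist_nil.mp h1] at h3
  exact h3.symm

lemma lcs_nil_right (u : List Bool) : LCSlen u [] = 0 := by
  obtain ⟨w, _, h2, h3⟩ := lcs_exists u []
  rw [List.sublist_nil.mp h2] at h3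
  exact h3.symm

lemma lcs_eq_heads (x : Bool) (u v : List Bool) :
    LCSlen (x::u) (x::v) = LCSlen u v + 1 := by
  refine le_antisymm ?_ ?_
  · obtain ⟨w, h1, h2, h3⟩ := lcs_exists (x::u) (x::v)
    rw [← h3]
    match w with
    | [] => exact Nat.zero_le _
    | z::w' =>
      have t1 : w'.Sublist u := by
        cases h1 with
        | cons _ h => exact ((List.sublist_cons_self z w').trans h)
        | cons_cons _ h => exact h
      have t2 : w'.Sublist v := by
        cases h2 with
        | cons _ h => exact ((List.sublist_cons_self z w').trans h)
        | cons_cons _ h => exact h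
      simpa using Nat.add_le_add_right (lcs_le t1 t2) 1
  · obtain ⟨w, h1, h2, h3⟩ := lcs_exists u v
    have := lcs_le (w := x::w) (h1.cons₂ x) (h2.cons₂ x)
    simpa [h3] using this

lemma lcs_ne_heads {x y : Bool} (hxy : x ≠ y) (u v : List Bool) :
    LCSlen (x::u) (y::v) = max (LCSlen u (y::v)) (LCSlen (x::u) v) := by
  refine le_antisymm ?_ (max_le ?_ ?_)
  · obtain ⟨w, h1, h2, h3⟩ := lcs_exists (x::u) (y::v)
    rw [← h3]
    match w with
    | [] => exact Nat.zero_le _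
    | z::w' =>
      by_cases hz : z = x
      · have hzy : z ≠ y := hz ▸ hxy
        have t2 : (z::w').Sublist v := by
          cases h2 with
          | cons _ h => exact h
          | cons_cons _ h => exact absurd rfl hzy
        exact le_max_of_le_right (lcs_le h1 t2)
      · have t1 : (z::w').Sublist u := by
          cases h1 with
          | cons _ h => exact h
          | cons_cons _ h => exact absurd rfl hz
        exact le_max_of_le_left (lcs_le t1 h2)
  · obtain ⟨w, h1, h2, h3⟩ := lcs_exists u (y::v)
    exact h3 ▸ lcs_le (h1.trans (List.sublist_cons_self x u)) h2
  · obtain ⟨w, h1, h2, h3⟩ := lcs_exists (x::u) v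
    exact h3 ▸ lcs_le h1 (h2.trans (List.sublist_cons_self y v))

/-! ### A recursive computation of `LCSlen` -/

def lcsN : List Bool → List Bool → ℕ
  | [], _ => 0
  | _::_, [] => 0
  | x::u, y::v =>
      if x = y then lcsN u v + 1 else max (lcsN u (y::v)) (lcsN (x::u) v)
  termination_by u v => u.length + v.length
  decreasing_by all_goals simp <;> omega

lemma lcsN_eq (u v : List Bool) : LCSlen u v = lcsN u v := by
  induction u, v using lcsN.induct with
  | case1 v => simp [lcsN, lcs_nil_left]
  | case2 x u => simp [lcsN, lcs_nil_right]
  | case3 x u v ih => rw [lcsN, if_pos rfl, lcs_eq_heads, ih]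
  | case4 x u y v hxy ih1 ih2 => rw [lcsN, if_neg hxy, lcs_ne_heads hxy, ih1, ih2]

/-! ### The two word families -/

def w1 : Bool → ℕ → List Bool
  | _, 0 => []
  | s, n+1 => s :: w1 (!s) n

def cy (p : ℕ) : Bool := decide (p % 4 = 1) || decide (p % 4 = 2)

def w2 : ℕ → ℕ → List Bool
  | _, 0 => []
  | p, m+1 => cy p :: w2 (p+1) m

lemma w2_add4 (m : ℕ) : ∀ p, w2 (p + 4) m = w2 p m := by
  induction m with
  | zero => intro p; rfl
  | succ m ih =>
    intro p
    show cy (p+4) :: w2 (p+5) m = cy p :: w2 (p+1) m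
    have hm : (p+4) % 4 = p % 4 := by omega
    have : cy (p+4) = cy p := by simp [cy, hm]
    rw [this, show p + 5 = (p+1) + 4 from rfl, ih]

lemma w2four (m : ℕ) : w2 4 m = w2 0 m := w2_add4 m 0

lemma step_eq (s : Bool) (p n m : ℕ) (hsp : s = cy p) :
    lcsN (w1 s (n+1)) (w2 p (m+1)) = lcsN (w1 (!s) n) (w2 (p+1) m) + 1 := by
  rw [show w1 s (n+1) = s :: w1 (!s) n from rfl,
      show w2 p (m+1) = cy p :: w2 (p+1) m from rfl, lcsN, if_pos hsp]

lemma step_ne (s : Bool) (p n m : ℕ) (hsp : ¬ s = cy p) :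
    lcsN (w1 s (n+1)) (w2 p (m+1)) =
      max (lcsN (w1 (!s) n) (w2 p (m+1))) (lcsN (w1 s (n+1)) (w2 (p+1) m)) := by
  rw [show w2 p (m+1) = cy p :: w2 (p+1) m from rfl]
  rw [show w1 s (n+1) = s :: w1 (!s) n from rfl, lcsN, if_neg hsp]

/-- The closed form for `lcsN (w1 s n) (w2 p m)`. -/
def Fc (s : Bool) (p n m : ℕ) : ℕ :=
  min n (min m ((2*n + m + (p + if s then 1 else 3) % 4 - 1) / 4))

lemma key : ∀ K n m, n + m ≤ K → ∀ (s : Bool) (p : ℕ), p < 4 →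
    lcsN (w1 s n) (w2 p m) = Fc s p n m := by
  intro K
  induction K with
  | zero =>
    intro n m h s p _
    obtain ⟨rfl, rfl⟩ : n = 0 ∧ m = 0 := by omega
    cases s <;> simp [w1, w2, lcsN, Fc]
  | succ K ih =>
    intro n m h s p hp
    match n, m with
    | 0, m => cases s <;> simp [w1, lcsN, Fc]
    | n+1, 0 => cases s <;> simp [w1, w2, lcsN, Fc]
    | n+1, m+1 =>
      have h1 : n + (m+1) ≤ K := by omega
      have h2 : (n+1) + m ≤ K := by omega
      have h3 : n + m ≤ K := by omega
      interval_cases p <;> cases s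
      · rw [step_eq _ _ _ _ (by decide), ih _ _ h3 _ 1 (by norm_num)]
        simp [Fc]; omega
      · rw [step_ne _ _ _ _ (by decide), ih _ _ h1 _ 0 (by norm_num),
            ih _ _ h2 _ 1 (by norm_num)]
        simp [Fc]; omega
      · rw [step_ne _ _ _ _ (by decide), ih _ _ h1 _ 1 (by norm_num),
            ih _ _ h2 _ 2 (by norm_num)]
        simp [Fc]; omega
      · rw [step_eq _ _ _ _ (by decide), ih _ _ h3 _ 2 (by norm_num)]
        simp [Fc]; omega
      · rw [step_ne _ _ _ _ (by decide), ih _ _ h1 _ 2 (by norm_num),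
            ih _ _ h2 _ 3 (by norm_num)]
        simp [Fc]; omega
      · rw [step_eq _ _ _ _ (by decide), ih _ _ h3 _ 3 (by norm_num)]
        simp [Fc]; omega
      · rw [step_eq _ _ _ _ (by decide), w2four, ih _ _ h3 _ 0 (by norm_num)]
        simp [Fc]; omega
      · rw [step_ne _ _ _ _ (by decide), w2four, ih _ _ h1 _ 3 (by norm_num),
            ih _ _ h2 _ 0 (by norm_num)]
        simp [Fc]; omega

/-! ### Identifying `repPrefix` with the word families -/

lemma take_flatten_replicate (x : List Bool) (m : ℕ) : ∀ j j', m ≤ j * x.length →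
    m ≤ j' * x.length →
    ((List.replicate j x).flatten.take m) = ((List.replicate j' x).flatten.take m) := by
  have main : ∀ j j', j ≤ j' → m ≤ j * x.length →
      ((List.replicate j' x).flatten.take m) = ((List.replicate j x).flatten.take m) := by
    intro j j' hle hm
    have : List.replicate j' x = List.replicate j x ++ List.replicate (j' - j) x := by
      rw [← List.replicate_add]; congr 1; omega
    rw [this, List.flatten_append, List.take_append_of_le_length]
    simpa [List.length_flatten] using hm
  intro j j' hm hm'
  rcases le_total j j' with hle | hle
  · exact (main j j' hle hm).symm
  · exact main j' j hle hm'

lemma repPrefix_add_period (x : List Bool) (hx : x ≠ []) (m : ℕ) :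
    repPrefix x (m + x.length) = x ++ repPrefix x m := by
  have hL : 1 ≤ x.length := List.length_pos_iff.mpr hx
  unfold repPrefix
  have h1 : m + x.length = (m + x.length - 1) + 1 := by omega
  rw [h1, List.replicate_succ, List.flatten_cons, ← h1,
      show m + x.length = x.length + m by omega, List.take_length_add_append]
  congr 1
  have t1 : m ≤ (x.length + m - 1) * x.length := by
    calc m ≤ x.length + m - 1 := by omega
    _ ≤ (x.length + m - 1) * x.length := Nat.le_mul_of_pos_right _ hL
  have t2 : m ≤ m * x.length := Nat.le_mul_of_pos_right _ hL
  exact take_flatten_replicate x m _ _ t1 t2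

lemma rep1 : ∀ a, repPrefix [true, false] a = w1 true a := by
  intro a
  induction a using Nat.strong_induction_on with
  | _ a ih =>
    match a with
    | 0 => rfl
    | 1 => rfl
    | a+2 =>
      have h := repPrefix_add_period [true, false] (by simp) a
      norm_num at h
      rw [h, ih a (by omega)]
      rfl

lemma rep2 : ∀ b, repPrefix [false, true, true, false] b = w2 0 b := by
  intro b
  induction b using Nat.strong_induction_on with
  | _ b ih =>
    match b with
    | 0 => rfl
    | 1 => rfl
    | 2 => rfl
    | 3 => rfl
    | b+4 =>
      have h := repPrefix_add_period [false, true, true, false] (by simp) b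
      norm_num at h
      rw [h, ih b (by omega)]
      show _ = cy 0 :: cy 1 :: cy 2 :: cy 3 :: w2 4 b
      rw [w2four]
      rfl

lemma lcs_closed (a b : ℕ) :
    LCSlen (repPrefix [true, false] a) (repPrefix [false, true, true, false] b)
      = min a (min b ((2*a + b) / 4)) := by
  rw [lcsN_eq, rep1, rep2, key (a + b) a b le_rfl true 0 (by norm_num)]
  simp [Fc]

theorem stmt17 (a b : ℕ) (ha : 3 ≤ a) (hb : 2 ≤ b) (hbe : Even b) :
    LCSlen (repPrefix [true, false] a) (repPrefix [false, true, true, false] b)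
      = max (1 + LCSlen (repPrefix [true, false] (a - 1))
                (repPrefix [false, true, true, false] (b - 2)))
            (2 + LCSlen (repPrefix [true, false] (a - 3))
                (repPrefix [false, true, true, false] (b - 2))) := by
  rw [lcs_closed, lcs_closed, lcs_closed]
  have hb2 : b % 2 = 0 := Nat.even_iff.mp hbe
  omega
end

section
/- Define m(a,b) := m_LCS((10)^⟨a⟩, (0110)^⟨b⟩). For all integers a ≥ 3 and even b ≥ 2: m(a,b) = m(a−1, b−2) if a ≤ b/2; m(a,b) = m(a−1, b−2) + m(a−3, b−2) if b/2 < a < 3b/2; and m(a,b) = m(a−3, b−2) if a ≥ 3b/2. -/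
namespace S18


def vch (p : ℕ) : Bool := decide (p % 4 = 1 ∨ p % 4 = 2)

def vw (p n : ℕ) : List Bool := match n with
  | 0 => []
  | n+1 => vch p :: vw (p+1) n

def aw (c : Bool) (n : ℕ) : List Bool := match n with
  | 0 => []
  | n+1 => c :: aw (!c) n

def sV (x : Bool) (p : ℕ) : ℕ := if vch p = x then 1 else if vch (p+1) = x then 2 else 3

def cV (p : ℕ) : List Bool → ℕ
  | [] => 0
  | x :: w => sV x p + cV (p + sV x p) w

def cA (c : Bool) : List Bool → ℕ
  | [] => 0
  | x :: w => if x = c then 1 + cA (!c) w else 2 + cA c w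

lemma vch_add_four (p : ℕ) : vch (p + 4) = vch p := by
  simp [vch, Nat.add_mod]

lemma vw_add_four (p n : ℕ) : vw (p+4) n = vw p n := by
  induction n generalizing p with
  | zero => rfl
  | succ n ih =>
    show vch (p+4) :: vw (p+4+1) n = vch p :: vw (p+1) n
    rw [vch_add_four]
    have : p + 4 + 1 = p + 1 + 4 := by omega
    rw [this, ih]


lemma repPrefix_u (a : ℕ) : repPrefix [true, false] a = aw true a := by
  induction a using Nat.strong_induction_on with
  | _ a ih =>
    match a with
    | 0 => rfl
    | 1 => rfl
    | (m+2) =>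
      have h1 : repPrefix [true, false] (m+2)
          = true :: false :: repPrefix [true, false] m := by
        show (List.flatten (List.replicate (m+2) [true, false])).take (m+2) = _
        rw [List.replicate_succ, List.flatten_cons]
        have : List.replicate (m+1) [true, false]
            = List.replicate m [true, false] ++ [[true, false]] := List.replicate_succ' ..
        rw [this, List.flatten_append]
        simp only [List.cons_append, List.nil_append, List.take_succ_cons]
        rw [List.take_append_of_le_length (by simp [List.length_flatten]; omega)]
        rfl
      rw [h1, ih m (by omega)]
      rfl

lemma repPrefix_v (b : ℕ) : repPrefix [false, true, true, false] b = vw 0 b := by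
  induction b using Nat.strong_induction_on with
  | _ b ih =>
    match b with
    | 0 => rfl
    | 1 => rfl
    | 2 => rfl
    | 3 => rfl
    | (m+4) =>
      have h1 : repPrefix [false, true, true, false] (m+4)
          = false :: true :: true :: false :: repPrefix [false, true, true, false] m := by
        show (List.flatten (List.replicate (m+4) _)).take (m+4) = _
        rw [List.replicate_succ, List.flatten_cons]
        have h2 : ∀ j, List.replicate (m+j+1) [false, true, true, false]
            = List.replicate (m+j) [false, true, true, false] ++ [[false, true, true, false]] :=
          fun j => List.replicate_succ' ..
        rw [h2 2, List.flatten_append, h2 1, List.flatten_append, h2 0, List.flatten_append]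
        simp only [List.cons_append, List.nil_append, List.take_succ_cons, List.append_assoc]
        rw [List.take_append_of_le_length (by simp [List.length_flatten]; omega)]
        norm_num
        rfl
      rw [h1, ih m (by omega)]
      show _ = vw 0 (m+4)
      have : vw 0 (m+4) = false :: true :: true :: false :: vw 4 m := rfl
      rw [this, show (4:ℕ) = 0 + 4 from rfl, vw_add_four]



lemma mod4 (p : ℕ) : p % 4 = 0 ∨ p % 4 = 1 ∨ p % 4 = 2 ∨ p % 4 = 3 := by omega

lemma vch3 (p : ℕ) (x : Bool) : vch p = x ∨ vch (p+1) = x ∨ vch (p+2) = x := by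
  have h1 : (p+1) % 4 = (p%4+1)%4 := by omega
  have h2 : (p+2) % 4 = (p%4+2)%4 := by omega
  rcases mod4 p with h|h|h|h <;> cases x <;> simp [vch, h1, h2, h]

lemma sV_pos (x p) : 1 ≤ sV x p := by unfold sV; split_ifs <;> omega

lemma sV_le (x p) : sV x p ≤ 3 := by unfold sV; split_ifs <;> omega

lemma sV_skip {x p} (h : vch p ≠ x) : sV x p = 1 + sV x (p+1) := by
  rcases vch3 p x with h0 | h1 | h2
  · exact absurd h0 h
  · simp [sV, h, h1]
  · by_cases h1 : vch (p+1) = x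
    · simp [sV, h, h1]
    · simp [sV, h, h1, h2]

lemma sV_correct (x p) : vch (p + (sV x p - 1)) = x := by
  rcases vch3 p x with h0 | h1 | h2
  · simp [sV, h0]
  · by_cases h0 : vch p = x
    · simp [sV, h0]
    · simp [sV, h0, h1]
  · by_cases h0 : vch p = x
    · simp [sV, h0]
    · by_cases h1 : vch (p+1) = x
      · simp [sV, h0, h1]
      · simp [sV, h0, h1, h2]

lemma cV_le_succ : ∀ (w : List Bool) (p), cV p w ≤ 1 + cV (p+1) w := by
  intro w
  induction w with
  | nil => simp [cV]
  | cons x w ih =>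
    have gen : ∀ d p, cV p w ≤ d + cV (p+d) w := by
      intro d
      induction d with
      | zero => simp
      | succ d ihd =>
        intro p
        have h1 := ihd p
        have h2 := ih (p+d)
        have h3 : p + d + 1 = p + (d+1) := by omega
        rw [h3] at h2
        omega
    intro p
    by_cases hx : vch p = x
    · have h1 : sV x p = 1 := by simp [sV, hx]
      show sV x p + cV (p + sV x p) w ≤ 1 + (sV x (p+1) + cV ((p+1) + sV x (p+1)) w)
      rw [h1]
      have := gen (sV x (p+1)) (p+1)
      omega
    · have h1 : sV x p = 1 + sV x (p+1) := sV_skip hx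
      show sV x p + cV (p + sV x p) w ≤ 1 + (sV x (p+1) + cV ((p+1) + sV x (p+1)) w)
      rw [h1]
      have h2 : p + (1 + sV x (p+1)) = (p+1) + sV x (p+1) := by omega
      rw [h2]
      omega

lemma cA_le_succ (w : List Bool) (c : Bool) : cA c w ≤ 1 + cA (!c) w := by
  cases w with
  | nil => simp [cA]
  | cons x w =>
    by_cases hx : x = c
    · have hx2 : ¬ (x = !c) := by cases c <;> simp_all
      simp only [cA, if_pos hx, if_neg hx2]
      omega
    · have hx2 : x = !c := by cases c <;> cases x <;> simp_all
      simp only [cA, if_pos hx2, if_neg hx, Bool.not_not]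
      omega

lemma vw_append (p m k : ℕ) : vw p (m + k) = vw p m ++ vw (p + m) k := by
  induction m generalizing p with
  | zero => simp [vw]
  | succ m ih =>
    have h : m + 1 + k = (m + k) + 1 := by omega
    rw [h]
    show vch p :: vw (p+1) (m+k) = (vch p :: vw (p+1) m) ++ vw (p + (m+1)) k
    rw [ih (p+1)]
    have : p + 1 + m = p + (m+1) := by omega
    rw [this]
    rfl

lemma single_sublist_vw : ∀ (s p : ℕ) (x : Bool), 1 ≤ s → vch (p + (s-1)) = x →
    [x].Sublist (vw p s) := by
  intro s
  induction s with
  | zero => omega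
  | succ s ih =>
    intro p x _ hc
    cases s with
    | zero =>
      simp at hc
      show [x].Sublist (vch p :: vw (p+1) 0)
      rw [hc]
      exact List.Sublist.cons₂ x (List.nil_sublist _)
    | succ s =>
      have h2 : vch ((p+1) + (s+1-1)) = x := by
        have : (p+1) + (s+1-1) = p + (s+1+1-1) := by omega
        rw [this]; exact hc
      exact (ih (p+1) x (by omega) h2).cons (vch p)

lemma cV_zero_iff (p : ℕ) (w : List Bool) : cV p w = 0 ↔ w = [] := by
  cases w with
  | nil => simp [cV]
  | cons x w => simp [cV]; have := sV_pos x p; omega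

lemma sublist_vw_iff : ∀ (n p : ℕ) (w : List Bool), w.Sublist (vw p n) ↔ cV p w ≤ n := by
  intro n
  induction n using Nat.strong_induction_on with
  | _ n ih =>
    match n with
    | 0 =>
      intro p w
      constructor
      · intro h
        have : w = [] := List.sublist_nil.mp h
        simp [this, cV]
      · intro h
        have : w = [] := (cV_zero_iff p w).mp (by omega)
        simp [this]
    | (n+1) =>
      intro p w
      cases w with
      | nil => simp [cV, List.nil_sublist]
      | cons x w =>
        constructor
        · intro h
          cases h with
          | cons _ h =>
            have h1 := (ih n (by omega) (p+1) (x::w)).mp h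
            have h2 := cV_le_succ (x::w) p
            omega
          | cons_cons _ h =>
            have h1 := (ih n (by omega) (p+1) w).mp h
            show sV (vch p) p + cV (p + sV (vch p) p) w ≤ n + 1
            have hs : sV (vch p) p = 1 := by simp [sV]
            rw [hs]
            omega
        · intro h
          have hs1 := sV_pos x p
          have hs : sV x p ≤ n + 1 := by
            simp only [cV] at h; omega
          have hcv : cV (p + sV x p) w ≤ (n+1) - sV x p := by
            simp only [cV] at h; omega
          have hdec : vw p (n+1) = vw p (sV x p) ++ vw (p + sV x p) ((n+1) - sV x p) := by
            rw [← vw_append]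
            congr 1
            omega
          rw [hdec]
          have h1 : [x].Sublist (vw p (sV x p)) :=
            single_sublist_vw (sV x p) p x hs1 (sV_correct x p)
          have h2 : w.Sublist (vw (p + sV x p) ((n+1) - sV x p)) :=
            (ih ((n+1) - sV x p) (by omega) (p + sV x p) w).mpr hcv
          exact List.Sublist.append h1 h2

lemma cA_zero_iff (c : Bool) (w : List Bool) : cA c w = 0 ↔ w = [] := by
  cases w with
  | nil => simp [cA]
  | cons x w => simp only [cA]; split_ifs <;> simp

lemma sublist_aw_iff : ∀ (n : ℕ) (c : Bool) (w : List Bool), w.Sublist (aw c n) ↔ cA c w ≤ n := by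
  intro n
  induction n using Nat.strong_induction_on with
  | _ n ih =>
    match n with
    | 0 =>
      intro c w
      constructor
      · intro h
        have : w = [] := List.sublist_nil.mp h
        simp [this, cA]
      · intro h
        have : w = [] := (cA_zero_iff c w).mp (by omega)
        simp [this]
    | (n+1) =>
      intro c w
      cases w with
      | nil => simp [cA, List.nil_sublist]
      | cons x w =>
        constructor
        · intro h
          cases h with
          | cons _ h =>
            have h1 := (ih n (by omega) (!c) (x::w)).mp h
            have h2 := cA_le_succ (x::w) c
            omega
          | cons_cons _ h =>
            have h1 := (ih n (by omega) (!c) w).mp h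
            show cA c (c::w) ≤ n + 1
            have he : cA c (c::w) = 1 + cA (!c) w := by simp [cA]
            omega
        · intro h
          by_cases hx : x = c
          · subst hx
            have he : cA x (x::w) = 1 + cA (!x) w := by simp [cA]
            rw [he] at h
            have h1 := (ih n (by omega) (!x) w).mpr (by omega)
            exact h1.cons₂ x
          · simp only [cA, if_neg hx] at h
            have hx2 : x = !c := by cases c <;> cases x <;> simp_all
            obtain ⟨m, rfl⟩ : ∃ m, n = m + 1 := ⟨n - 1, by omega⟩
            have h1 := (ih m (by omega) c w).mpr (by omega)
            show (x::w).Sublist (c :: aw (!c) (m+1))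
            have haw : aw (!c) (m+1) = (!c) :: aw c m := by
              cases c <;> rfl
            rw [haw, ← hx2]
            exact (h1.cons₂ x).cons c


def sAc (x c : Bool) : ℕ := if x = c then 1 else 2
def nA (x c : Bool) : Bool := if x = c then !c else c

lemma cA_cons (c x : Bool) (w : List Bool) : cA c (x :: w) = sAc x c + cA (nA x c) w := by
  by_cases h : x = c <;> simp [cA, sAc, nA, h]

lemma cV_cons (p : ℕ) (x : Bool) (w : List Bool) : cV p (x :: w) = sV x p + cV (p + sV x p) w := rfl

def N (c : Bool) (p a b : ℕ) : ℕ → ℕ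
  | 0 => 1
  | (L+1) =>
      (if sAc false c ≤ a ∧ sV false p ≤ b then
         N (nA false c) (p + sV false p) (a - sAc false c) (b - sV false p) L else 0)
    + (if sAc true c ≤ a ∧ sV true p ≤ b then
         N (nA true c) (p + sV true p) (a - sAc true c) (b - sV true p) L else 0)

def Sset (c : Bool) (p a b L : ℕ) : Set (List Bool) :=
  {w | cA c w ≤ a ∧ cV p w ≤ b ∧ w.length = L}

lemma Sset_zero (c p a b) : Sset c p a b 0 = {[]} := by
  ext w
  cases w <;> simp [Sset, cA, cV]

lemma Sset_succ (c : Bool) (p a b L : ℕ) :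
    Sset c p a b (L+1) =
      (List.cons false '' (if sAc false c ≤ a ∧ sV false p ≤ b then
          Sset (nA false c) (p + sV false p) (a - sAc false c) (b - sV false p) L else ∅))
      ∪ (List.cons true '' (if sAc true c ≤ a ∧ sV true p ≤ b then
          Sset (nA true c) (p + sV true p) (a - sAc true c) (b - sV true p) L else ∅)) := by
  ext w
  cases w with
  | nil => simp [Sset]
  | cons x w =>
    have key : ∀ y : Bool, (x :: w) ∈ Sset c p a b (L+1) ∧ x = y ↔
        x = y ∧ w ∈ (if sAc y c ≤ a ∧ sV y p ≤ b then
          Sset (nA y c) (p + sV y p) (a - sAc y c) (b - sV y p) L else ∅) := by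
      intro y
      constructor
      · rintro ⟨hw, rfl⟩
        refine ⟨rfl, ?_⟩
        obtain ⟨h1, h2, h3⟩ := hw
        rw [cA_cons] at h1
        rw [cV_cons] at h2
        have hg : sAc x c ≤ a ∧ sV x p ≤ b := by omega
        rw [if_pos hg]
        exact ⟨by omega, by omega, by simpa using h3⟩
      · rintro ⟨rfl, hw⟩
        by_cases hg : sAc x c ≤ a ∧ sV x p ≤ b
        · rw [if_pos hg] at hw
          obtain ⟨h1, h2, h3⟩ := hw
          refine ⟨⟨?_, ?_, ?_⟩, rfl⟩
          · rw [cA_cons]; omega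
          · rw [cV_cons]; omega
          · simp [h3]
        · rw [if_neg hg] at hw
          exact absurd hw (Set.notMem_empty w)
    constructor
    · intro hw
      cases x with
      | false => exact Or.inl ⟨w, ((key false).mp ⟨hw, rfl⟩).2, rfl⟩
      | true => exact Or.inr ⟨w, ((key true).mp ⟨hw, rfl⟩).2, rfl⟩
    · rintro (⟨w', hw', he⟩ | ⟨w', hw', he⟩) <;>
      · cases he
        exact ((key _).mpr ⟨rfl, hw'⟩).1

lemma Sset_finite_card : ∀ (L : ℕ) (c : Bool) (p a b : ℕ),
    (Sset c p a b L).Finite ∧ (Sset c p a b L).ncard = N c p a b L := by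
  intro L
  induction L with
  | zero =>
    intro c p a b
    rw [Sset_zero]
    exact ⟨Set.finite_singleton _, by simp [N]⟩
  | succ L ih =>
    intro c p a b
    rw [Sset_succ]
    have hf : ∀ (y : Bool), (if sAc y c ≤ a ∧ sV y p ≤ b then
        Sset (nA y c) (p + sV y p) (a - sAc y c) (b - sV y p) L else ∅).Finite := by
      intro y; split_ifs
      · exact (ih _ _ _ _).1
      · exact Set.finite_empty
    have hcard : ∀ (y : Bool), (if sAc y c ≤ a ∧ sV y p ≤ b then
        Sset (nA y c) (p + sV y p) (a - sAc y c) (b - sV y p) L else ∅).ncard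
        = (if sAc y c ≤ a ∧ sV y p ≤ b then
            N (nA y c) (p + sV y p) (a - sAc y c) (b - sV y p) L else 0) := by
      intro y; split_ifs
      · exact (ih _ _ _ _).2
      · simp
    have hdisj : ∀ (s t : Set (List Bool)), Disjoint (List.cons false '' s) (List.cons true '' t) := by
      intro s t
      rw [Set.disjoint_left]
      rintro w ⟨w1, _, rfl⟩ ⟨w2, _, h⟩
      simp at h
    constructor
    · exact ((hf false).image _).union ((hf true).image _)
    · rw [Set.ncard_union_eq (hdisj _ _) ((hf false).image _) ((hf true).image _),
        Set.ncard_image_of_injective _ (List.cons_injective),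
        Set.ncard_image_of_injective _ (List.cons_injective), hcard false, hcard true]
      rfl

def del (c : Bool) (p : ℕ) : ℕ :=
  if c then (if p % 4 = 1 then 1 else if p % 4 = 2 then 2 else 0)
  else (if p % 4 = 0 then 2 else if p % 4 = 3 then 1 else 0)

lemma step_del (c x : Bool) (p : ℕ) :
    del (nA x c) (p + sV x p) + 4 ≤ 2 * sAc x c + sV x p + del c p := by
  have h0 : (p+1) % 4 = (p%4+1) % 4 := by omega
  have h1 : (p+2) % 4 = (p%4+2) % 4 := by omega
  have h3 : (p+3) % 4 = (p%4+3) % 4 := by omega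
  rcases mod4 p with h|h|h|h <;> cases c <;> cases x <;>
    simp [sV, vch, nA, sAc, del, h, h0, h1, h3]

lemma N_vanish : ∀ (L : ℕ) (c : Bool) (p a b : ℕ),
    2*a + b + del c p < 4*L → N c p a b L = 0 := by
  intro L
  induction L with
  | zero => intro c p a b h; omega
  | succ L ih =>
    intro c p a b h
    show (if _ then _ else 0) + (if _ then _ else 0) = 0
    have t : ∀ y : Bool, (if sAc y c ≤ a ∧ sV y p ≤ b then
         N (nA y c) (p + sV y p) (a - sAc y c) (b - sV y p) L else 0) = 0 := by
      intro y
      split_ifs with hg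
      · apply ih
        have := step_del c y p
        omega
      · rfl
    rw [t false, t true]


lemma N_mod : ∀ (L : ℕ) (c : Bool) (p a b : ℕ), N c (p+4) a b L = N c p a b L := by
  intro L
  induction L with
  | zero => intro c p a b; rfl
  | succ L ih =>
    intro c p a b
    have hsv : ∀ x, sV x (p+4) = sV x p := by
      intro x
      have h5 : p + 4 + 1 = (p+1) + 4 := by omega
      unfold sV
      rw [vch_add_four, h5, vch_add_four]
    show (if _ ∧ sV false (p+4) ≤ b then
         N _ ((p+4) + sV false (p+4)) _ (b - sV false (p+4)) L else 0)
      + (if _ ∧ sV true (p+4) ≤ b then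
         N _ ((p+4) + sV true (p+4)) _ (b - sV true (p+4)) L else 0)
      = _
    rw [hsv false, hsv true]
    have e1 : p + 4 + sV false p = (p + sV false p) + 4 := by omega
    have e2 : p + 4 + sV true p = (p + sV true p) + 4 := by omega
    rw [e1, e2, ih, ih]
    rfl

lemma N_unfold_A (a b L : ℕ) : N true 0 a b (L+1) =
    (if 2 ≤ a ∧ 1 ≤ b then N true 1 (a-2) (b-1) L else 0)
  + (if 1 ≤ a ∧ 2 ≤ b then N false 2 (a-1) (b-2) L else 0) := rfl

lemma N_unfold_A2 (a b L : ℕ) : N false 2 a b (L+1) =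
    (if 1 ≤ a ∧ 2 ≤ b then N true 4 (a-1) (b-2) L else 0)
  + (if 2 ≤ a ∧ 1 ≤ b then N false 3 (a-2) (b-1) L else 0) := rfl

lemma N_unfold_C (a b L : ℕ) : N true 1 a b (L+1) =
    (if 2 ≤ a ∧ 3 ≤ b then N true 4 (a-2) (b-3) L else 0)
  + (if 1 ≤ a ∧ 1 ≤ b then N false 2 (a-1) (b-1) L else 0) := rfl

lemma N_unfold_C2 (a b L : ℕ) : N false 3 a b (L+1) =
    (if 1 ≤ a ∧ 1 ≤ b then N true 4 (a-1) (b-1) L else 0)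
  + (if 2 ≤ a ∧ 3 ≤ b then N false 6 (a-2) (b-3) L else 0) := rfl

lemma main_claims : ∀ (L : ℕ),
    (∀ k a, 2*a + 2*k = 4*L → N true 0 a (2*k) L = if k ≤ L then Nat.choose k (L-k) else 0)
  ∧ (∀ k a, 2*a + 2*k = 4*L → N false 2 a (2*k) L = if k ≤ L then Nat.choose k (L-k) else 0)
  ∧ (∀ k a, 2*a + 2*k = 4*L + 2 → N true 0 a (2*k) L = if k ≤ L+1 then Nat.choose (k+1) (L+1-k) else 0)
  ∧ (∀ k a, 2*a + 2*k = 4*L + 2 → N false 2 a (2*k) L = if k ≤ L+1 then Nat.choose (k+1) (L+1-k) else 0)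
  ∧ (∀ k a, 2*a + 2*k + 2 = 4*L → N true 1 a (2*k+1) L = if k+1 ≤ L then Nat.choose k (L-1-k) else 0)
  ∧ (∀ k a, 2*a + 2*k + 2 = 4*L → N false 3 a (2*k+1) L = if k+1 ≤ L then Nat.choose k (L-1-k) else 0)
  ∧ (∀ k a, 2*a + 2*k = 4*L → N true 1 a (2*k+1) L = if k ≤ L then Nat.choose (k+1) (L-k) else 0)
  ∧ (∀ k a, 2*a + 2*k = 4*L → N false 3 a (2*k+1) L = if k ≤ L then Nat.choose (k+1) (L-k) else 0) := by
  intro L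
  induction L with
  | zero =>
    refine ⟨?_, ?_, ?_, ?_, ?_, ?_, ?_, ?_⟩ <;> intro k a heq
    · have hk : k = 0 := by omega
      subst hk; simp [N]
    · have hk : k = 0 := by omega
      subst hk; simp [N]
    · rcases (by omega : k = 0 ∨ k = 1) with hk | hk <;> subst hk <;> simp [N]
    · rcases (by omega : k = 0 ∨ k = 1) with hk | hk <;> subst hk <;> simp [N]
    · omega
    · omega
    · have hk : k = 0 := by omega
      subst hk; simp [N]
    · have hk : k = 0 := by omega
      subst hk; simp [N]
  | succ L ih =>
    obtain ⟨ihA, ihA2, ihB, ihB2, ihC, ihC2, ihD, ihD2⟩ := ih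
    have hvan0 : ∀ a b L', 2*a + b < 4*L' → N true 0 a b L' = 0 := by
      intro a b L' h; exact N_vanish L' true 0 a b (by simpa [del] using h)
    have hvan2 : ∀ a b L', 2*a + b < 4*L' → N false 2 a b L' = 0 := by
      intro a b L' h; exact N_vanish L' false 2 a b (by simpa [del] using h)
    -- C-step
    have stepC : ∀ k a, 2*a + 2*k + 2 = 4*(L+1) →
        N true 1 a (2*k+1) (L+1) = if k+1 ≤ L+1 then Nat.choose k (L+1-1-k) else 0 := by
      intro k a heq
      rw [N_unfold_C]
      have t1 : (if 2 ≤ a ∧ 3 ≤ 2*k+1 then N true 4 (a-2) (2*k+1-3) L else 0) = 0 := by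
        split_ifs with hg
        · rw [show (4:ℕ) = 0 + 4 from rfl, N_mod]
          exact hvan0 _ _ _ (by omega)
        · rfl
      rw [t1]
      rcases Nat.eq_zero_or_pos a with ha | ha
      · rw [if_neg (show ¬(1 ≤ a ∧ 1 ≤ 2*k+1) by omega),
          if_neg (show ¬(k+1 ≤ L+1) by omega)]
      · rw [if_pos ⟨ha, by omega⟩, show 2*k+1-1 = 2*k by omega, ihA2 k (a-1) (by omega),
          show L+1-1-k = L-k by omega]
        rcases le_or_gt k L with h2 | h2
        · rw [if_pos h2, if_pos (show k+1 ≤ L+1 by omega)]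
          omega
        · rw [if_neg (show ¬(k ≤ L) by omega), if_neg (show ¬(k+1 ≤ L+1) by omega)]
    -- C2-step
    have stepC2 : ∀ k a, 2*a + 2*k + 2 = 4*(L+1) →
        N false 3 a (2*k+1) (L+1) = if k+1 ≤ L+1 then Nat.choose k (L+1-1-k) else 0 := by
      intro k a heq
      rw [N_unfold_C2]
      have t2 : (if 2 ≤ a ∧ 3 ≤ 2*k+1 then N false 6 (a-2) (2*k+1-3) L else 0) = 0 := by
        split_ifs with hg
        · rw [show (6:ℕ) = 2 + 4 from rfl, N_mod]
          exact hvan2 _ _ _ (by omega)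
        · rfl
      rw [t2]
      rcases Nat.eq_zero_or_pos a with ha | ha
      · rw [if_neg (show ¬(1 ≤ a ∧ 1 ≤ 2*k+1) by omega),
          if_neg (show ¬(k+1 ≤ L+1) by omega)]
      · rw [if_pos ⟨ha, by omega⟩, show 2*k+1-1 = 2*k by omega,
          show (4:ℕ) = 0 + 4 from rfl, N_mod, ihA k (a-1) (by omega),
          show L+1-1-k = L-k by omega]
        rcases le_or_gt k L with h2 | h2
        · rw [if_pos h2, if_pos (show k+1 ≤ L+1 by omega)]
          omega
        · rw [if_neg (show ¬(k ≤ L) by omega), if_neg (show ¬(k+1 ≤ L+1) by omega)]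
    -- D-step
    have stepD : ∀ k a, 2*a + 2*k = 4*(L+1) →
        N true 1 a (2*k+1) (L+1) = if k ≤ L+1 then Nat.choose (k+1) (L+1-k) else 0 := by
      intro k a heq
      rw [N_unfold_C]
      have t1 : (if 2 ≤ a ∧ 3 ≤ 2*k+1 then N true 4 (a-2) (2*k+1-3) L else 0) = 0 := by
        split_ifs with hg
        · rw [show (4:ℕ) = 0 + 4 from rfl, N_mod]
          exact hvan0 _ _ _ (by omega)
        · rfl
      rw [t1]
      rcases Nat.eq_zero_or_pos a with ha | ha
      · rw [if_neg (show ¬(1 ≤ a ∧ 1 ≤ 2*k+1) by omega),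
          if_neg (show ¬(k ≤ L+1) by omega)]
      · rw [if_pos ⟨ha, by omega⟩, show 2*k+1-1 = 2*k by omega, ihB2 k (a-1) (by omega)]
        rcases le_or_gt k (L+1) with h2 | h2
        · rw [if_pos h2]
          omega
        · rw [if_neg (show ¬(k ≤ L+1) by omega)]
    -- D2-step
    have stepD2 : ∀ k a, 2*a + 2*k = 4*(L+1) →
        N false 3 a (2*k+1) (L+1) = if k ≤ L+1 then Nat.choose (k+1) (L+1-k) else 0 := by
      intro k a heq
      rw [N_unfold_C2]
      have t2 : (if 2 ≤ a ∧ 3 ≤ 2*k+1 then N false 6 (a-2) (2*k+1-3) L else 0) = 0 := by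
        split_ifs with hg
        · rw [show (6:ℕ) = 2 + 4 from rfl, N_mod]
          exact hvan2 _ _ _ (by omega)
        · rfl
      rw [t2]
      rcases Nat.eq_zero_or_pos a with ha | ha
      · rw [if_neg (show ¬(1 ≤ a ∧ 1 ≤ 2*k+1) by omega),
          if_neg (show ¬(k ≤ L+1) by omega)]
      · rw [if_pos ⟨ha, by omega⟩, show 2*k+1-1 = 2*k by omega,
          show (4:ℕ) = 0 + 4 from rfl, N_mod, ihB k (a-1) (by omega)]
        rcases le_or_gt k (L+1) with h2 | h2
        · rw [if_pos h2]
          omega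
        · rw [if_neg (show ¬(k ≤ L+1) by omega)]
    -- A-step
    have stepA : ∀ k a, 2*a + 2*k = 4*(L+1) →
        N true 0 a (2*k) (L+1) = if k ≤ L+1 then Nat.choose k (L+1-k) else 0 := by
      intro k a heq
      rw [N_unfold_A]
      rcases Nat.eq_zero_or_pos k with hk | hk
      · subst hk
        rw [if_neg (show ¬(2 ≤ a ∧ 1 ≤ 2*0) by omega),
          if_neg (show ¬(1 ≤ a ∧ 2 ≤ 2*0) by omega),
          if_pos (show 0 ≤ L+1 by omega),
          Nat.choose_eq_zero_of_lt (by omega)]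
      · by_cases ha2 : 2 ≤ a
        · rw [if_pos (show 2 ≤ a ∧ 1 ≤ 2*k by omega),
            if_pos (show 1 ≤ a ∧ 2 ≤ 2*k by omega),
            show 2*k - 1 = 2*(k-1)+1 by omega, show 2*k - 2 = 2*(k-1) by omega,
            ihC (k-1) (a-2) (by omega), ihA2 (k-1) (a-1) (by omega)]
          rcases le_or_gt k (L+1) with h | h
          · rw [if_pos h]
            by_cases hkL : k ≤ L
            · rw [if_pos (show (k-1)+1 ≤ L by omega), if_pos (show k-1 ≤ L by omega),
                show L-1-(k-1) = L-k by omega, show L-(k-1) = (L-k)+1 by omega,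
                show L+1-k = (L-k)+1 by omega]
              have hp := Nat.choose_succ_succ (k-1) (L-k)
              simp only [Nat.succ_eq_add_one] at hp
              rw [show (k-1)+1 = k by omega] at hp
              omega
            · rw [if_neg (show ¬((k-1)+1 ≤ L) by omega), if_pos (show k-1 ≤ L by omega),
                show L-(k-1) = 0 by omega, show L+1-k = 0 by omega]
              simp
          · rw [if_neg (show ¬((k-1)+1 ≤ L) by omega), if_neg (show ¬(k-1 ≤ L) by omega),
              if_neg (show ¬(k ≤ L+1) by omega)]
        · rw [if_neg (show ¬(2 ≤ a ∧ 1 ≤ 2*k) by omega)]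
          rcases Nat.eq_zero_or_pos a with ha0 | ha1
          · rw [if_neg (show ¬(1 ≤ a ∧ 2 ≤ 2*k) by omega),
              if_neg (show ¬(k ≤ L+1) by omega)]
          · rw [if_pos (show 1 ≤ a ∧ 2 ≤ 2*k by omega),
              show 2*k - 2 = 2*(k-1) by omega, ihA2 (k-1) (a-1) (by omega)]
            rcases Nat.eq_zero_or_pos L with hL | hL
            · subst hL
              have hk1 : k = 1 := by omega
              subst hk1
              norm_num
            · rw [if_neg (show ¬(k-1 ≤ L) by omega), if_neg (show ¬(k ≤ L+1) by omega)]
    -- A2-step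
    have stepA2 : ∀ k a, 2*a + 2*k = 4*(L+1) →
        N false 2 a (2*k) (L+1) = if k ≤ L+1 then Nat.choose k (L+1-k) else 0 := by
      intro k a heq
      rw [N_unfold_A2]
      rcases Nat.eq_zero_or_pos k with hk | hk
      · subst hk
        rw [if_neg (show ¬(1 ≤ a ∧ 2 ≤ 2*0) by omega),
          if_neg (show ¬(2 ≤ a ∧ 1 ≤ 2*0) by omega),
          if_pos (show 0 ≤ L+1 by omega),
          Nat.choose_eq_zero_of_lt (by omega)]
      · by_cases ha2 : 2 ≤ a
        · rw [if_pos (show 1 ≤ a ∧ 2 ≤ 2*k by omega),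
            if_pos (show 2 ≤ a ∧ 1 ≤ 2*k by omega),
            show 2*k - 1 = 2*(k-1)+1 by omega, show 2*k - 2 = 2*(k-1) by omega,
            show (4:ℕ) = 0 + 4 from rfl, N_mod,
            ihA (k-1) (a-1) (by omega), ihC2 (k-1) (a-2) (by omega)]
          rcases le_or_gt k (L+1) with h | h
          · rw [if_pos h]
            by_cases hkL : k ≤ L
            · rw [if_pos (show (k-1)+1 ≤ L by omega), if_pos (show k-1 ≤ L by omega),
                show L-1-(k-1) = L-k by omega, show L-(k-1) = (L-k)+1 by omega,
                show L+1-k = (L-k)+1 by omega]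
              have hp := Nat.choose_succ_succ (k-1) (L-k)
              simp only [Nat.succ_eq_add_one] at hp
              rw [show (k-1)+1 = k by omega] at hp
              omega
            · rw [if_neg (show ¬((k-1)+1 ≤ L) by omega), if_pos (show k-1 ≤ L by omega),
                show L-(k-1) = 0 by omega, show L+1-k = 0 by omega]
              simp
          · rw [if_neg (show ¬((k-1)+1 ≤ L) by omega), if_neg (show ¬(k-1 ≤ L) by omega),
              if_neg (show ¬(k ≤ L+1) by omega)]
        · rw [if_neg (show ¬(2 ≤ a ∧ 1 ≤ 2*k) by omega)]
          rcases Nat.eq_zero_or_pos a with ha0 | ha1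
          · rw [if_neg (show ¬(1 ≤ a ∧ 2 ≤ 2*k) by omega),
              if_neg (show ¬(k ≤ L+1) by omega)]
          · rw [if_pos (show 1 ≤ a ∧ 2 ≤ 2*k by omega),
              show 2*k - 2 = 2*(k-1) by omega,
              show (4:ℕ) = 0 + 4 from rfl, N_mod, ihA (k-1) (a-1) (by omega)]
            rcases Nat.eq_zero_or_pos L with hL | hL
            · subst hL
              have hk1 : k = 1 := by omega
              subst hk1
              norm_num
            · rw [if_neg (show ¬(k-1 ≤ L) by omega), if_neg (show ¬(k ≤ L+1) by omega)]
    -- B-step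
    have stepB : ∀ k a, 2*a + 2*k = 4*(L+1) + 2 →
        N true 0 a (2*k) (L+1) = if k ≤ L+2 then Nat.choose (k+1) (L+2-k) else 0 := by
      intro k a heq
      rw [N_unfold_A]
      rcases Nat.eq_zero_or_pos k with hk | hk
      · subst hk
        rw [if_neg (show ¬(2 ≤ a ∧ 1 ≤ 2*0) by omega),
          if_neg (show ¬(1 ≤ a ∧ 2 ≤ 2*0) by omega),
          if_pos (show 0 ≤ L+2 by omega),
          Nat.choose_eq_zero_of_lt (by omega)]
      · by_cases ha2 : 2 ≤ a
        · rw [if_pos (show 2 ≤ a ∧ 1 ≤ 2*k by omega),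
            if_pos (show 1 ≤ a ∧ 2 ≤ 2*k by omega),
            show 2*k - 1 = 2*(k-1)+1 by omega, show 2*k - 2 = 2*(k-1) by omega,
            ihD (k-1) (a-2) (by omega), ihB2 (k-1) (a-1) (by omega)]
          rcases le_or_gt k (L+2) with h | h
          · rw [if_pos h]
            by_cases hkL : k ≤ L+1
            · rw [if_pos (show k-1 ≤ L by omega), if_pos (show k-1 ≤ L+1 by omega),
                show L-(k-1) = L+1-k by omega, show L+1-(k-1) = (L+1-k)+1 by omega,
                show L+2-k = (L+1-k)+1 by omega, show (k-1)+1 = k by omega]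
              have hp := Nat.choose_succ_succ k (L+1-k)
              simp only [Nat.succ_eq_add_one] at hp
              omega
            · rw [if_neg (show ¬(k-1 ≤ L) by omega), if_pos (show k-1 ≤ L+1 by omega),
                show L+1-(k-1) = 0 by omega, show L+2-k = 0 by omega,
                show (k-1)+1 = k by omega]
              simp
          · rw [if_neg (show ¬(k-1 ≤ L) by omega), if_neg (show ¬(k-1 ≤ L+1) by omega),
              if_neg (show ¬(k ≤ L+2) by omega)]
        · rw [if_neg (show ¬(2 ≤ a ∧ 1 ≤ 2*k) by omega)]
          rcases Nat.eq_zero_or_pos a with ha0 | ha1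
          · rw [if_neg (show ¬(1 ≤ a ∧ 2 ≤ 2*k) by omega),
              if_neg (show ¬(k ≤ L+2) by omega)]
          · rw [if_pos (show 1 ≤ a ∧ 2 ≤ 2*k by omega),
              show 2*k - 2 = 2*(k-1) by omega, ihB2 (k-1) (a-1) (by omega)]
            rcases Nat.eq_zero_or_pos L with hL | hL
            · subst hL
              have hk1 : k = 2 := by omega
              subst hk1
              norm_num
            · rw [if_neg (show ¬(k-1 ≤ L+1) by omega), if_neg (show ¬(k ≤ L+2) by omega)]
    -- B2-step
    have stepB2 : ∀ k a, 2*a + 2*k = 4*(L+1) + 2 →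
        N false 2 a (2*k) (L+1) = if k ≤ L+2 then Nat.choose (k+1) (L+2-k) else 0 := by
      intro k a heq
      rw [N_unfold_A2]
      rcases Nat.eq_zero_or_pos k with hk | hk
      · subst hk
        rw [if_neg (show ¬(1 ≤ a ∧ 2 ≤ 2*0) by omega),
          if_neg (show ¬(2 ≤ a ∧ 1 ≤ 2*0) by omega),
          if_pos (show 0 ≤ L+2 by omega),
          Nat.choose_eq_zero_of_lt (by omega)]
      · by_cases ha2 : 2 ≤ a
        · rw [if_pos (show 1 ≤ a ∧ 2 ≤ 2*k by omega),
            if_pos (show 2 ≤ a ∧ 1 ≤ 2*k by omega),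
            show 2*k - 1 = 2*(k-1)+1 by omega, show 2*k - 2 = 2*(k-1) by omega,
            show (4:ℕ) = 0 + 4 from rfl, N_mod,
            ihB (k-1) (a-1) (by omega), ihD2 (k-1) (a-2) (by omega)]
          rcases le_or_gt k (L+2) with h | h
          · rw [if_pos h]
            by_cases hkL : k ≤ L+1
            · rw [if_pos (show k-1 ≤ L+1 by omega), if_pos (show k-1 ≤ L by omega),
                show L-(k-1) = L+1-k by omega, show L+1-(k-1) = (L+1-k)+1 by omega,
                show L+2-k = (L+1-k)+1 by omega, show (k-1)+1 = k by omega]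
              have hp := Nat.choose_succ_succ k (L+1-k)
              simp only [Nat.succ_eq_add_one] at hp
              omega
            · rw [if_neg (show ¬(k-1 ≤ L) by omega), if_pos (show k-1 ≤ L+1 by omega),
                show L+1-(k-1) = 0 by omega, show L+2-k = 0 by omega,
                show (k-1)+1 = k by omega]
              simp
          · rw [if_neg (show ¬(k-1 ≤ L+1) by omega), if_neg (show ¬(k-1 ≤ L) by omega),
              if_neg (show ¬(k ≤ L+2) by omega)]
        · rw [if_neg (show ¬(2 ≤ a ∧ 1 ≤ 2*k) by omega)]
          rcases Nat.eq_zero_or_pos a with ha0 | ha1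
          · rw [if_neg (show ¬(1 ≤ a ∧ 2 ≤ 2*k) by omega),
              if_neg (show ¬(k ≤ L+2) by omega)]
          · rw [if_pos (show 1 ≤ a ∧ 2 ≤ 2*k by omega),
              show 2*k - 2 = 2*(k-1) by omega,
              show (4:ℕ) = 0 + 4 from rfl, N_mod, ihB (k-1) (a-1) (by omega)]
            rcases Nat.eq_zero_or_pos L with hL | hL
            · subst hL
              have hk1 : k = 2 := by omega
              subst hk1
              norm_num
            · rw [if_neg (show ¬(k-1 ≤ L+1) by omega), if_neg (show ¬(k ≤ L+2) by omega)]
    exact ⟨stepA, stepA2, stepB, stepB2, stepC, stepC2, stepD, stepD2⟩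


lemma hset (a b : ℕ) : ∀ L, {w : List Bool | w.Sublist (aw true a) ∧ w.Sublist (vw 0 b) ∧ w.length = L}
    = Sset true 0 a b L := by
  intro L
  ext w
  simp only [Set.mem_setOf_eq, Sset, sublist_aw_iff, sublist_vw_iff]

lemma LCS_eq_and_mLCS (a b Λ : ℕ) (h1 : 0 < N true 0 a b Λ)
    (h2 : ∀ L, Λ < L → N true 0 a b L = 0) :
    mLCS (aw true a) (vw 0 b) = N true 0 a b Λ := by
  set S : Set ℕ := {m : ℕ | ∃ w : List Bool, w.Sublist (aw true a) ∧ w.Sublist (vw 0 b) ∧ w.length = m} with hS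
  have hfc := fun L => Sset_finite_card L true 0 a b
  have hne : (Sset true 0 a b Λ).Nonempty :=
    (Set.ncard_pos (hfc Λ).1).mp (by rw [(hfc Λ).2]; exact h1)
  have hmem : Λ ∈ S := by
    obtain ⟨w, hw⟩ := hne
    exact ⟨w, (sublist_aw_iff a true w).mpr hw.1, (sublist_vw_iff b 0 w).mpr hw.2.1, hw.2.2⟩
  have hub : ∀ m ∈ S, m ≤ Λ := by
    rintro m ⟨w, hw1, hw2, hw3⟩
    by_contra hgt
    have hwm : w ∈ Sset true 0 a b m :=
      ⟨(sublist_aw_iff a true w).mp hw1, (sublist_vw_iff b 0 w).mp hw2, hw3⟩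
    have : (Sset true 0 a b m).ncard = 0 := by rw [(hfc m).2]; exact h2 m (by omega)
    have := (Set.ncard_pos (hfc m).1).mpr ⟨w, hwm⟩
    omega
  have hL : LCSlen (aw true a) (vw 0 b) = Λ :=
    le_antisymm (csSup_le ⟨Λ, hmem⟩ hub) (le_csSup ⟨Λ, hub⟩ hmem)
  unfold mLCS
  rw [hL, hset a b Λ, (hfc Λ).2]

lemma mLCS_of_sublist_left {u v : List Bool} (h : u.Sublist v) : mLCS u v = 1 := by
  set S : Set ℕ := {m : ℕ | ∃ w : List Bool, w.Sublist u ∧ w.Sublist v ∧ w.length = m} with hS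
  have hmem : u.length ∈ S := ⟨u, List.Sublist.refl u, h, rfl⟩
  have hub : ∀ m ∈ S, m ≤ u.length := by
    rintro m ⟨w, hw1, _, rfl⟩
    exact hw1.length_le
  have hL : LCSlen u v = u.length :=
    le_antisymm (csSup_le ⟨_, hmem⟩ hub) (le_csSup ⟨_, hub⟩ hmem)
  unfold mLCS
  rw [hL]
  have : {w : List Bool | w.Sublist u ∧ w.Sublist v ∧ w.length = u.length} = {u} := by
    ext w
    constructor
    · rintro ⟨hw1, _, hw3⟩
      exact hw1.eq_of_length hw3
    · rintro rfl
      exact ⟨List.Sublist.refl _, h, rfl⟩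
  rw [this, Set.ncard_singleton]

lemma mLCS_of_sublist_right {u v : List Bool} (h : v.Sublist u) : mLCS u v = 1 := by
  set S : Set ℕ := {m : ℕ | ∃ w : List Bool, w.Sublist u ∧ w.Sublist v ∧ w.length = m} with hS
  have hmem : v.length ∈ S := ⟨v, h, List.Sublist.refl v, rfl⟩
  have hub : ∀ m ∈ S, m ≤ v.length := by
    rintro m ⟨w, _, hw2, rfl⟩
    exact hw2.length_le
  have hL : LCSlen u v = v.length :=
    le_antisymm (csSup_le ⟨_, hmem⟩ hub) (le_csSup ⟨_, hub⟩ hmem)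
  unfold mLCS
  rw [hL]
  have : {w : List Bool | w.Sublist u ∧ w.Sublist v ∧ w.length = v.length} = {v} := by
    ext w
    constructor
    · rintro ⟨_, hw2, hw3⟩
      exact hw2.eq_of_length hw3
    · rintro rfl
      exact ⟨h, List.Sublist.refl _, rfl⟩
  rw [this, Set.ncard_singleton]

-- cost computations for the full words
lemma cV_mod : ∀ (w : List Bool) (p : ℕ), cV (p+4) w = cV p w := by
  intro w
  induction w with
  | nil => intro p; rfl
  | cons x w ih =>
    intro p
    have hsv : sV x (p+4) = sV x p := by
      unfold sV
      rw [show p+4+1 = (p+1)+4 by omega]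
      simp [vch, Nat.add_mod]
    show sV x (p+4) + cV ((p+4) + sV x (p+4)) w = sV x p + cV (p + sV x p) w
    rw [hsv, show p + 4 + sV x p = (p + sV x p) + 4 by omega, ih]

lemma cV0_aw : ∀ n, cV 0 (aw true n) = 2*n ∧ cV 2 (aw false n) = 2*n := by
  intro n
  induction n with
  | zero => exact ⟨rfl, rfl⟩
  | succ n ih =>
    constructor
    · show cV 0 (true :: aw false n) = _
      show sV true 0 + cV (0 + sV true 0) (aw false n) = _
      rw [show sV true 0 = 2 from rfl]
      show 2 + cV 2 (aw false n) = _
      rw [ih.2]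
      omega
    · show cV 2 (false :: aw true n) = _
      show sV false 2 + cV (2 + sV false 2) (aw true n) = _
      rw [show sV false 2 = 2 from rfl]
      show 2 + cV 4 (aw true n) = _
      rw [show (4:ℕ) = 0 + 4 from rfl, cV_mod, ih.1]
      omega

lemma cA_vw : ∀ m, cA true (vw 0 (2*m)) = 3*m := by
  intro m
  induction m using Nat.strong_induction_on with
  | _ m ih =>
    match m with
    | 0 => rfl
    | 1 => rfl
    | (m+2) =>
      have h4 : vw 0 (2*(m+2)) = false :: true :: true :: false :: vw 0 (2*m) := by
        show vw 0 (2*m+4) = _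
        have h5 : vw 0 (2*m+4) = vch 0 :: vch 1 :: vch 2 :: vch 3 :: vw 4 (2*m) := rfl
        rw [h5, show (4:ℕ) = 0+4 from rfl, vw_add_four]
        rfl
      rw [h4]
      have h6 := ih m (by omega)
      simp [cA]
      omega

lemma u_sub_v {a b : ℕ} (h : 2*a ≤ b) : (aw true a).Sublist (vw 0 b) := by
  rw [sublist_vw_iff]
  rw [(cV0_aw a).1]
  omega

lemma v_sub_u {k a : ℕ} (h : 3*k ≤ a) : (vw 0 (2*k)).Sublist (aw true a) := by
  rw [sublist_aw_iff, cA_vw]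
  omega

lemma m_even (k j : ℕ) (hj : j ≤ k) :
    mLCS (aw true (k+2*j)) (vw 0 (2*k)) = Nat.choose k j := by
  have hval : N true 0 (k+2*j) (2*k) (k+j) = Nat.choose k j := by
    rw [(main_claims (k+j)).1 k (k+2*j) (by omega), if_pos (by omega),
      show k+j-k = j by omega]
  rw [LCS_eq_and_mLCS (k+2*j) (2*k) (k+j) ?h1 ?h2, hval]
  case h1 => rw [hval]; exact Nat.choose_pos hj
  case h2 =>
    intro L hL
    exact N_vanish L true 0 _ _ (by simp only [del]; norm_num; omega)

lemma m_odd (k j : ℕ) (hj1 : 1 ≤ j) (hj2 : j ≤ k+1) :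
    mLCS (aw true (k+2*j-1)) (vw 0 (2*k)) = Nat.choose (k+1) j := by
  have hval : N true 0 (k+2*j-1) (2*k) (k+j-1) = Nat.choose (k+1) j := by
    rw [(main_claims (k+j-1)).2.2.1 k (k+2*j-1) (by omega), if_pos (by omega),
      show k+j-1+1-k = j by omega]
  rw [LCS_eq_and_mLCS (k+2*j-1) (2*k) (k+j-1) ?h1 ?h2, hval]
  case h1 => rw [hval]; exact Nat.choose_pos hj2
  case h2 =>
    intro L hL
    exact N_vanish L true 0 _ _ (by simp only [del]; norm_num; omega)

end S18

open S18 in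
theorem stmt18 (a b : ℕ) (ha : 3 ≤ a) (hb : 2 ≤ b) (hbe : Even b) :
    (a ≤ b / 2 →
      mLCS (repPrefix [true, false] a) (repPrefix [false, true, true, false] b)
        = mLCS (repPrefix [true, false] (a - 1))
            (repPrefix [false, true, true, false] (b - 2))) ∧
    (b / 2 < a → a < 3 * b / 2 →
      mLCS (repPrefix [true, false] a) (repPrefix [false, true, true, false] b)
        = mLCS (repPrefix [true, false] (a - 1))
            (repPrefix [false, true, true, false] (b - 2))
          + mLCS (repPrefix [true, false] (a - 3))
              (repPrefix [false, true, true, false] (b - 2))) ∧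
    (3 * b / 2 ≤ a →
      mLCS (repPrefix [true, false] a) (repPrefix [false, true, true, false] b)
        = mLCS (repPrefix [true, false] (a - 3))
            (repPrefix [false, true, true, false] (b - 2))) := by
  obtain ⟨k, rfl⟩ : ∃ k, b = 2*k := by
    obtain ⟨t, ht⟩ := hbe
    exact ⟨t, by omega⟩
  have hk1 : 1 ≤ k := by omega
  rw [repPrefix_u, repPrefix_u, repPrefix_u, repPrefix_v, repPrefix_v,
    show 2*k-2 = 2*(k-1) by omega]
  have hd2 : 2*k/2 = k := by omega
  have hd32 : 3*(2*k)/2 = 3*k := by omega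
  rw [hd2, hd32]
  refine ⟨?_, ?_, ?_⟩
  · -- region 1
    intro h1
    rw [mLCS_of_sublist_left (u_sub_v (by omega)),
      mLCS_of_sublist_left (u_sub_v (by omega : 2*(a-1) ≤ 2*(k-1)))]
  · -- middle
    intro h2 h3
    have hk2 : 2 ≤ k := by omega
    rcases Nat.even_or_odd (a - k) with he | ho
    · obtain ⟨j, rfl⟩ : ∃ j, a = k + 2*j := by
        obtain ⟨t, ht⟩ := he
        exact ⟨t, by omega⟩
      have hj1 : 1 ≤ j := by omega
      have hjk : j ≤ k - 1 := by omega
      rw [m_even k j (by omega),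
        show k+2*j-1 = (k-1)+2*j by omega,
        show k+2*j-3 = (k-1)+2*(j-1) by omega,
        m_even (k-1) j (by omega), m_even (k-1) (j-1) (by omega)]
      have hp := Nat.choose_succ_succ (k-1) (j-1)
      simp only [Nat.succ_eq_add_one] at hp
      rw [show k-1+1 = k by omega, show j-1+1 = j by omega] at hp
      omega
    · obtain ⟨j, rfl⟩ : ∃ j, a = k + 2*j - 1 := by
        obtain ⟨t, ht⟩ := ho
        exact ⟨t+1, by omega⟩
      have hj1 : 1 ≤ j := by omega
      have hjk : j ≤ k := by omega
      rw [m_odd k j hj1 (by omega),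
        show k+2*j-1-1 = (k-1)+2*j-1 by omega,
        m_odd (k-1) j hj1 (by omega)]
      rcases Nat.lt_or_ge j 2 with hj2 | hj2
      · -- j = 1 : second subproblem is in region 1
        have hj : j = 1 := by omega
        subst hj
        rw [show k+2*1-1-3 = k-2 by omega,
          mLCS_of_sublist_left (u_sub_v (by omega : 2*(k-2) ≤ 2*(k-1)))]
        rw [Nat.choose_one_right, Nat.choose_one_right]
        omega
      · rw [show k+2*j-1-3 = (k-1)+2*(j-1)-1 by omega,
          m_odd (k-1) (j-1) (by omega) (by omega)]
        have hp := Nat.choose_succ_succ k (j-1)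
        simp only [Nat.succ_eq_add_one] at hp
        rw [show j-1+1 = j by omega] at hp
        rw [show k-1+1 = k by omega]
        omega
  · -- region 3
    intro h3
    rw [mLCS_of_sublist_right (v_sub_u (by omega)),
      mLCS_of_sublist_right (v_sub_u (by omega : 3*(k-1) ≤ a-3))]
end
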